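/- arXiv:1808.01240 — 8 statements merged into one kernel-verified Lean document; each statement's English description precedes it below -/
import Mathlib

section
/- Let p ≥ 1 and let D = diag(δ₁,…,δ_p) and D* = diag(δ₁*,…,δ_p*) be p×p diagonal matrices with strictly positive diagonal entries, let Λ = diag(σ₁,…,σ_p) be a p×p diagonal matrix with strictly positive diagonal entries, and let Ψ and Ψ* be p×p symmetric positive definite matrices whose diagonal entries all equal 1. If D Λ Ψ Λ D = D* Λ Ψ* Λ D*, then D = D* and Ψ = Ψ*. -/
open Matrix

/-- Identifiability of the reparameterized MAL distribution: if
`D Λ Ψ Λ D = D* Λ Ψ* Λ D*` with `D, D*` diagonal with positive entries, `Λ` diagonal with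
positive entries, and `Ψ, Ψ*` correlation matrices (symmetric positive definite with unit
diagonal), then `D = D*` and `Ψ = Ψ*`. -/
theorem mal_identifiability (p : ℕ) (hp : 1 ≤ p)
    (δ δstar σ : Fin p → ℝ)
    (hδ : ∀ j, 0 < δ j) (hδstar : ∀ j, 0 < δstar j) (hσ : ∀ j, 0 < σ j)
    (Ψ Ψstar : Matrix (Fin p) (Fin p) ℝ)
    (hΨ : Ψ.PosDef) (hΨstar : Ψstar.PosDef)
    (hΨdiag : ∀ j, Ψ j j = 1) (hΨstardiag : ∀ j, Ψstar j j = 1)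
    (h : diagonal δ * diagonal σ * Ψ * diagonal σ * diagonal δ =
         diagonal δstar * diagonal σ * Ψstar * diagonal σ * diagonal δstar) :
    diagonal δ = diagonal δstar ∧ Ψ = Ψstar := by

  have hentry : ∀ i j, δ i * σ i * Ψ i j * (σ j * δ j) =
      δstar i * σ i * Ψstar i j * (σ j * δstar j) := by
    intro i j
    have := congrFun (congrFun h i) j
    simpa [Matrix.diagonal_mul, Matrix.mul_diagonal,
      mul_comm, mul_assoc, mul_left_comm] using this
  have hδeq : δ = δstar := by
    funext j
    have := hentry j j
    rw [hΨdiag j, hΨstardiag j] at this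
    have h1 := hδ j; have h2 := hδstar j; have h3 := hσ j
    have hs : (0:ℝ) < σ j * σ j := mul_pos h3 h3
    have key : δ j * δ j = δstar j * δstar j := by
      apply mul_right_cancel₀ (ne_of_gt hs)
      ring_nf; ring_nf at this; linarith
    apply le_antisymm <;> nlinarith [key]
  subst hδeq
  refine ⟨rfl, ?_⟩
  funext i j
  have := hentry i j
  have hne : δ i * σ i ≠ 0 := ne_of_gt (mul_pos (hδ i) (hσ i))
  have hne2 : σ j * δ j ≠ 0 := ne_of_gt (mul_pos (hσ j) (hδ j))
  field_simp at this
  exact mul_left_cancel₀ (mul_ne_zero (mul_ne_zero hne (hσ j).ne') (hδ j).ne') (by linear_combination this)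
end

section
/- Let τ ∈ (0,1) and δ > 0. Let V be a real random variable with exponential distribution of rate 1/δ (density (1/δ)e^{−v/δ} on (0,∞)) and let Z be a standard normal random variable independent of V. Set ξ = (1 − 2τ)/(τ(1 − τ)) and σ = √(2/(τ(1 − τ))). Then P(ξ V + σ √(δ V) Z < 0) = τ. Equivalently, for any μ ∈ ℝ, the random variable Y = μ + ξ V + σ √(δ V) Z satisfies P(Y < μ) = τ. -/
open MeasureTheory ProbabilityTheory Real Set Filter

noncomputable def stdPhi (c : ℝ) : ℝ := ∫ x in Set.Iio c, gaussianPDFReal 0 1 x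

lemma gaussianPDFReal_one_def (x : ℝ) :
    gaussianPDFReal 0 1 x = (Real.sqrt (2 * π))⁻¹ * rexp (-x ^ 2 / 2) := by
  simp [gaussianPDFReal]

lemma continuous_stdpdf : Continuous (gaussianPDFReal 0 1) := by
  simp only [gaussianPDFReal_def]
  fun_prop

lemma stdPhi_eq_Iic (c : ℝ) : stdPhi c = ∫ x in Set.Iic c, gaussianPDFReal 0 1 x :=
  setIntegral_congr_set Iio_ae_eq_Iic

lemma stdPhi_nonneg (c : ℝ) : 0 ≤ stdPhi c :=
  setIntegral_nonneg measurableSet_Iio fun x _ => gaussianPDFReal_nonneg 0 1 x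

lemma stdPhi_le_one (c : ℝ) : stdPhi c ≤ 1 := by
  rw [← integral_gaussianPDFReal_eq_one 0 (one_ne_zero)]
  exact setIntegral_le_integral (integrable_gaussianPDFReal 0 1)
    (Filter.Eventually.of_forall fun x => gaussianPDFReal_nonneg 0 1 x)

lemma hasDerivAt_stdPhi (c : ℝ) : HasDerivAt stdPhi (gaussianPDFReal 0 1 c) c := by
  have h : ∀ x : ℝ, stdPhi x = stdPhi 0 + ∫ t in (0:ℝ)..x, gaussianPDFReal 0 1 t := by
    intro x
    rw [stdPhi_eq_Iic, stdPhi_eq_Iic,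
      ← intervalIntegral.integral_Iic_sub_Iic ((integrable_gaussianPDFReal 0 1).integrableOn)
        ((integrable_gaussianPDFReal 0 1).integrableOn)]
    ring
  have : HasDerivAt (fun x => stdPhi 0 + ∫ t in (0:ℝ)..x, gaussianPDFReal 0 1 t)
      (gaussianPDFReal 0 1 c) c := by
    refine HasDerivAt.const_add _ ?_
    exact intervalIntegral.integral_hasDerivAt_right
      ((integrable_gaussianPDFReal 0 1).intervalIntegrable)
      continuous_stdpdf.stronglyMeasurable.stronglyMeasurableAtFilter
      continuous_stdpdf.continuousAt
  exact this.congr_of_eventuallyEq (Filter.Eventually.of_forall h)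

lemma continuous_stdPhi : Continuous stdPhi :=
  continuous_iff_continuousAt.mpr fun c => (hasDerivAt_stdPhi c).continuousAt

lemma stdPhi_zero : stdPhi 0 = 1 / 2 := by
  have heven : ∀ x : ℝ, gaussianPDFReal 0 1 (-x) = gaussianPDFReal 0 1 x := by
    intro x; simp [gaussianPDFReal_one_def]
  have h1 : stdPhi 0 = ∫ x in Set.Ioi (0:ℝ), gaussianPDFReal 0 1 x := by
    have := integral_comp_neg_Ioi (0:ℝ) (gaussianPDFReal 0 1)
    rw [stdPhi_eq_Iic]
    rw [neg_zero] at this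
    rw [← this]
    exact setIntegral_congr_fun measurableSet_Ioi fun x _ => (heven x)
  have h2 : stdPhi 0 + ∫ x in Set.Ioi (0:ℝ), gaussianPDFReal 0 1 x = 1 := by
    rw [stdPhi_eq_Iic, intervalIntegral.integral_Iic_add_Ioi
      ((integrable_gaussianPDFReal 0 1).integrableOn)
      ((integrable_gaussianPDFReal 0 1).integrableOn)]
    exact integral_gaussianPDFReal_eq_one 0 one_ne_zero
  rw [h1] at h2 ⊢
  linarith

lemma stdPhi_tendsto_atBot : Filter.Tendsto stdPhi Filter.atBot (nhds 0) := by
  have h : ∀ c : ℝ, stdPhi c = ∫ x, (Set.Iio c).indicator (gaussianPDFReal 0 1) x := by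
    intro c; rw [stdPhi, integral_indicator measurableSet_Iio]
  refine Filter.Tendsto.congr (fun c => (h c).symm) ?_
  have key : Filter.Tendsto (fun c : ℝ => ∫ x, (Set.Iio c).indicator (gaussianPDFReal 0 1) x)
      Filter.atBot (nhds (∫ _ : ℝ, (0 : ℝ))) := by
    refine tendsto_integral_filter_of_dominated_convergence (gaussianPDFReal 0 1)
      (Filter.Eventually.of_forall fun c =>
        ((continuous_stdpdf.stronglyMeasurable).indicator measurableSet_Iio).aestronglyMeasurable)
      ?_ (integrable_gaussianPDFReal 0 1) ?_
    · refine Filter.Eventually.of_forall fun c => Filter.Eventually.of_forall fun x => ?_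
      rw [Real.norm_eq_abs, abs_of_nonneg (Set.indicator_nonneg
        (fun y _ => gaussianPDFReal_nonneg 0 1 y) x)]
      exact Set.indicator_apply_le' (fun _ => le_refl _) (fun _ => gaussianPDFReal_nonneg 0 1 x)
    · refine Filter.Eventually.of_forall fun x => ?_
      have hev : ∀ᶠ c in Filter.atBot, (Set.Iio c).indicator (gaussianPDFReal 0 1) x = 0 := by
        filter_upwards [Filter.eventually_lt_atBot x] with c hc
        exact Set.indicator_of_notMem (by simpa using hc.le) _
      exact Filter.Tendsto.congr' (hev.mono fun c hc => hc.symm) tendsto_const_nhds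
  simpa using key

lemma gaussianReal_Iio (c : ℝ) :
    gaussianReal 0 1 (Set.Iio c) = ENNReal.ofReal (stdPhi c) := by
  rw [gaussianReal_apply_eq_integral 0 one_ne_zero]; rfl

lemma tendsto_sqrt_atTop' : Filter.Tendsto Real.sqrt Filter.atTop Filter.atTop := by
  refine Filter.tendsto_atTop.2 fun b => Filter.eventually_atTop.2 ⟨max 0 b ^ 2, fun v hv => ?_⟩
  have h0 : (0:ℝ) ≤ max 0 b := le_max_left _ _
  calc b ≤ max 0 b := le_max_right _ _
    _ = Real.sqrt (max 0 b ^ 2) := by rw [Real.sqrt_sq h0]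
    _ ≤ Real.sqrt v := Real.sqrt_le_sqrt hv

lemma key_integrableOn (δ a : ℝ) (hδ : 0 < δ) :
    IntegrableOn (fun v => (1/δ) * rexp (-v/δ) * stdPhi (-(a * Real.sqrt v)))
      (Set.Ioi (0:ℝ)) := by
  have hbd : IntegrableOn (fun v : ℝ => (1/δ) * rexp (-v/δ)) (Set.Ioi (0:ℝ)) := by
    have h := (exp_neg_integrableOn_Ioi (0:ℝ) (show (0:ℝ) < 1/δ by positivity))
    have h' := h.const_mul (1/δ)
    exact h'.congr (Filter.Eventually.of_forall fun v => by
      simp only []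
      rw [show -(1/δ)*v = -v/δ by ring])
  have hmeas : AEStronglyMeasurable (fun v => (1/δ) * rexp (-v/δ) * stdPhi (-(a * Real.sqrt v)))
      (volume.restrict (Set.Ioi (0:ℝ))) := by
    refine Continuous.aestronglyMeasurable ?_
    exact (continuous_const.mul (Real.continuous_exp.comp (continuous_id.neg.div_const δ))).mul
      (continuous_stdPhi.comp ((continuous_const.mul Real.continuous_sqrt).neg))
  refine hbd.mono' hmeas (Filter.Eventually.of_forall fun v => ?_)
  rw [Real.norm_eq_abs, abs_of_nonneg (mul_nonneg (by positivity) (stdPhi_nonneg _))]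
  calc (1/δ) * rexp (-v/δ) * stdPhi (-(a * Real.sqrt v)) ≤ (1/δ) * rexp (-v/δ) * 1 :=
        mul_le_mul_of_nonneg_left (stdPhi_le_one _) (by positivity)
    _ = (1/δ) * rexp (-v/δ) := mul_one _

lemma key_integral (δ a : ℝ) (hδ : 0 < δ) :
    ∫ v in Set.Ioi (0:ℝ), (1/δ) * rexp (-v/δ) * stdPhi (-(a * Real.sqrt v))
      = 1/2 - a / (2 * Real.sqrt (2/δ + a^2)) := by
  set s : ℝ := Real.sqrt (2/δ + a^2) with hs_def
  have harg : 0 < 2/δ + a^2 := by positivity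
  have hs : 0 < s := Real.sqrt_pos.2 harg
  have hs2 : s^2 = 2/δ + a^2 := Real.sq_sqrt harg.le
  set G : ℝ → ℝ := fun v =>
    -(rexp (-v/δ) * stdPhi (-(a * Real.sqrt v))) + (a/s) * stdPhi (-(s * Real.sqrt v))
    with hG_def
  have hcontG : Continuous G := by
    refine Continuous.add ?_ ?_
    · exact ((Real.continuous_exp.comp (continuous_id.neg.div_const δ)).mul
        (continuous_stdPhi.comp ((continuous_const.mul Real.continuous_sqrt).neg))).neg
    · exact continuous_const.mul
        (continuous_stdPhi.comp ((continuous_const.mul Real.continuous_sqrt).neg))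
  have hG0 : G 0 = -(1/2) + a / (2*s) := by
    simp only [hG_def, Real.sqrt_zero, mul_zero, neg_zero, stdPhi_zero, neg_div, zero_div,
      Real.exp_zero, one_mul]
    ring
  have hderiv : ∀ v ∈ Set.Ioi (0:ℝ), HasDerivAt G
      ((1/δ) * rexp (-v/δ) * stdPhi (-(a * Real.sqrt v))) v := by
    intro v hv
    have hv0 : 0 < v := hv
    have hsv : 0 < Real.sqrt v := Real.sqrt_pos.2 hv0
    have hsq : HasDerivAt Real.sqrt (1/(2*Real.sqrt v)) v := Real.hasDerivAt_sqrt hv0.ne'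
    have h1 : HasDerivAt (fun v => -(a * Real.sqrt v)) (-(a * (1/(2*Real.sqrt v)))) v :=
      (hsq.const_mul a).neg
    have hPhi1 : HasDerivAt (fun v => stdPhi (-(a * Real.sqrt v)))
        (gaussianPDFReal 0 1 (-(a * Real.sqrt v)) * (-(a * (1/(2*Real.sqrt v))))) v :=
      (hasDerivAt_stdPhi _).comp v h1
    have h2 : HasDerivAt (fun v => -(s * Real.sqrt v)) (-(s * (1/(2*Real.sqrt v)))) v :=
      (hsq.const_mul s).neg
    have hPhi2 : HasDerivAt (fun v => stdPhi (-(s * Real.sqrt v)))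
        (gaussianPDFReal 0 1 (-(s * Real.sqrt v)) * (-(s * (1/(2*Real.sqrt v))))) v :=
      (hasDerivAt_stdPhi _).comp v h2
    have hexp : HasDerivAt (fun v : ℝ => rexp (-v/δ)) (rexp (-v/δ) * (-1/δ)) v := by
      have hlin : HasDerivAt (fun v : ℝ => -v/δ) (-1/δ) v := (hasDerivAt_id v).neg.div_const δ
      exact hlin.exp
    have hGd : HasDerivAt G
        (-(rexp (-v/δ) * (-1/δ) * stdPhi (-(a * Real.sqrt v)) +
            rexp (-v/δ) * (gaussianPDFReal 0 1 (-(a * Real.sqrt v)) * (-(a * (1/(2*Real.sqrt v)))))) +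
          (a/s) * (gaussianPDFReal 0 1 (-(s * Real.sqrt v)) * (-(s * (1/(2*Real.sqrt v)))))) v :=
      ((hexp.mul hPhi1).neg).add (hPhi2.const_mul (a/s))
    have hpdf : rexp (-v/δ) * gaussianPDFReal 0 1 (-(a * Real.sqrt v))
        = gaussianPDFReal 0 1 (-(s * Real.sqrt v)) := by
      have hvsq : Real.sqrt v ^ 2 = v := Real.sq_sqrt hv0.le
      rw [gaussianPDFReal_one_def, gaussianPDFReal_one_def, mul_comm (rexp (-v/δ)),
        mul_assoc, ← Real.exp_add]
      congr 2
      have e1 : (-(a * Real.sqrt v))^2 = a^2 * v := by rw [neg_sq, mul_pow, hvsq]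
      have e2 : (-(s * Real.sqrt v))^2 = (2/δ + a^2) * v := by
        rw [neg_sq, mul_pow, hvsq, hs2]
      rw [e1, e2]
      field_simp
      ring
    convert hGd using 1
    rw [← hpdf]
    field_simp
    ring
  have htend : Filter.Tendsto G Filter.atTop (nhds 0) := by
    have t1 : Filter.Tendsto (fun v => rexp (-v/δ) * stdPhi (-(a * Real.sqrt v)))
        Filter.atTop (nhds 0) := by
      have hb : Filter.Tendsto (fun v : ℝ => rexp (-v/δ)) Filter.atTop (nhds 0) := by
        have : Filter.Tendsto (fun v : ℝ => v/δ) Filter.atTop Filter.atTop :=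
          Filter.tendsto_id.atTop_div_const hδ
        have := Real.tendsto_exp_neg_atTop_nhds_zero.comp this
        refine this.congr fun v => ?_
        simp [Function.comp, neg_div]
      refine squeeze_zero (fun v => mul_nonneg (Real.exp_pos _).le (stdPhi_nonneg _))
        (fun v => ?_) hb
      calc rexp (-v/δ) * stdPhi (-(a * Real.sqrt v)) ≤ rexp (-v/δ) * 1 :=
            mul_le_mul_of_nonneg_left (stdPhi_le_one _) (Real.exp_pos _).le
        _ = rexp (-v/δ) := mul_one _
    have t2 : Filter.Tendsto (fun v => stdPhi (-(s * Real.sqrt v))) Filter.atTop (nhds 0) := by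
      have h2 : Filter.Tendsto (fun v : ℝ => -(s * Real.sqrt v)) Filter.atTop Filter.atBot := by
        have := (tendsto_sqrt_atTop'.const_mul_atTop hs)
        exact Filter.tendsto_neg_atTop_atBot.comp this
      exact stdPhi_tendsto_atBot.comp h2
    have := (t1.neg).add (t2.const_mul (a/s))
    simpa using this
  have hint := key_integrableOn δ a hδ
  have := integral_Ioi_of_hasDerivAt_of_tendsto hcontG.continuousWithinAt hderiv hint htend
  rw [this, hG0]
  ring

/-- The quantile property of the Gaussian location-scale mixture representation of the
Asymmetric Laplace distribution: if `V ~ Exp(1/δ)` (density `(1/δ)e^{-v/δ}` on `(0,∞)`),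
`Z ~ N(0,1)` independent of `V`, `ξ = (1-2τ)/(τ(1-τ))` and `σ = √(2/(τ(1-τ)))`, then
`P(ξV + σ√(δV) Z < 0) = τ`, and for every `μ`, `Y = μ + ξV + σ√(δV) Z` satisfies
`P(Y < μ) = τ`. -/
theorem al_mixture_quantile {Ω : Type*} [MeasurableSpace Ω]
    (P : Measure Ω) [IsProbabilityMeasure P]
    (τ δ : ℝ) (hτ : τ ∈ Set.Ioo (0 : ℝ) 1) (hδ : 0 < δ)
    (V Z : Ω → ℝ) (hV : Measurable V) (hZ : Measurable Z)
    (hVlaw : P.map V =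
      volume.withDensity (fun v => ENNReal.ofReal (if 0 < v then (1 / δ) * exp (-v / δ) else 0)))
    (hZlaw : P.map Z = gaussianReal 0 1)
    (hindep : IndepFun V Z P)
    (ξ σ : ℝ)
    (hξ : ξ = (1 - 2 * τ) / (τ * (1 - τ)))
    (hσ : σ = Real.sqrt (2 / (τ * (1 - τ)))) :
    P {ω | ξ * V ω + σ * Real.sqrt (δ * V ω) * Z ω < 0} = ENNReal.ofReal τ ∧
      ∀ μ : ℝ, P {ω | μ + ξ * V ω + σ * Real.sqrt (δ * V ω) * Z ω < μ} = ENNReal.ofReal τ := by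
  obtain ⟨ht0, ht1⟩ := hτ
  have ht1' : 0 < 1 - τ := by linarith
  have htt : 0 < τ * (1 - τ) := mul_pos ht0 ht1'
  have hσpos : 0 < σ := hσ ▸ Real.sqrt_pos.2 (by positivity)
  have hσ2 : σ ^ 2 = 2 / (τ * (1 - τ)) := by rw [hσ]; exact Real.sq_sqrt (by positivity)
  have hδs : 0 < Real.sqrt δ := Real.sqrt_pos.2 hδ
  have hd2 : Real.sqrt δ ^ 2 = δ := Real.sq_sqrt hδ.le
  set a : ℝ := ξ / (σ * Real.sqrt δ) with ha_def
  -- algebraic identity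
  have hpos : 0 < τ * (1 - τ) * σ * Real.sqrt δ := by positivity
  have key : 2 / δ + a ^ 2 = (1 / (τ * (1 - τ) * σ * Real.sqrt δ)) ^ 2 := by
    have ha2 : a ^ 2 = ξ ^ 2 / (σ ^ 2 * δ) := by
      rw [ha_def, div_pow, mul_pow, hd2]
    have hr : (1 / (τ * (1 - τ) * σ * Real.sqrt δ)) ^ 2
        = 1 / ((τ * (1 - τ)) ^ 2 * σ ^ 2 * Real.sqrt δ ^ 2) := by
      rw [div_pow, one_pow, mul_pow, mul_pow]
    rw [hr, hσ2, hd2, ha2, hσ2, hξ]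
    field_simp
    ring
  have hsqrt : Real.sqrt (2 / δ + a ^ 2) = 1 / (τ * (1 - τ) * σ * Real.sqrt δ) := by
    rw [key, Real.sqrt_sq (by positivity)]
  have halg : 1 / 2 - a / (2 * Real.sqrt (2 / δ + a ^ 2)) = τ := by
    rw [hsqrt, ha_def, hξ]
    field_simp
    ring
  -- measure theory
  set A : Set (ℝ × ℝ) := {p : ℝ × ℝ | ξ * p.1 + σ * Real.sqrt (δ * p.1) * p.2 < 0} with hA_def
  have hAf : Continuous fun p : ℝ × ℝ => ξ * p.1 + σ * Real.sqrt (δ * p.1) * p.2 :=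
    ((continuous_const.mul continuous_fst).add
      (((continuous_const.mul (Real.continuous_sqrt.comp
        (continuous_const.mul continuous_fst)))).mul continuous_snd))
  have hA : MeasurableSet A := measurableSet_lt hAf.measurable measurable_const
  have hmap : P.map (fun ω => (V ω, Z ω)) = (P.map V).prod (P.map Z) :=
    (indepFun_iff_map_prod_eq_prod_map_map hV.aemeasurable hZ.aemeasurable).mp hindep
  have hPE : P {ω | ξ * V ω + σ * Real.sqrt (δ * V ω) * Z ω < 0}
      = ((P.map V).prod (gaussianReal 0 1)) A := by
    rw [← hZlaw, ← hmap, Measure.map_apply (hV.prodMk hZ) hA]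
    rfl
  have hfm : Measurable fun v : ℝ =>
      ENNReal.ofReal (if 0 < v then (1 / δ) * rexp (-v / δ) else 0) := by
    refine Measurable.ennreal_ofReal ?_
    exact Measurable.ite (measurableSet_lt measurable_const measurable_id)
      (((measurable_id.neg.div_const δ).exp).const_mul (1 / δ)) measurable_const
  have hkm : Measurable fun v : ℝ => gaussianReal 0 1 (Prod.mk v ⁻¹' A) :=
    measurable_measure_prodMk_left hA
  have hprod : ((P.map V).prod (gaussianReal 0 1)) A
      = ∫⁻ v, ENNReal.ofReal (if 0 < v then (1 / δ) * rexp (-v / δ) else 0) *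
          gaussianReal 0 1 (Prod.mk v ⁻¹' A) ∂volume := by
    rw [Measure.prod_apply hA, hVlaw, lintegral_withDensity_eq_lintegral_mul _ hfm hkm]
    rfl
  have hslice : ∀ v : ℝ, 0 < v →
      (Prod.mk v ⁻¹' A) = Set.Iio (-(a * Real.sqrt v)) := by
    intro v hv
    have hsv : 0 < Real.sqrt v := Real.sqrt_pos.2 hv
    have hsp : 0 < σ * Real.sqrt (δ * v) := mul_pos hσpos (Real.sqrt_pos.2 (mul_pos hδ hv))
    have hvv : Real.sqrt v * Real.sqrt v = v := Real.mul_self_sqrt hv.le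
    have heq : -(ξ * v) / (σ * Real.sqrt (δ * v)) = -(a * Real.sqrt v) := by
      rw [ha_def, Real.sqrt_mul hδ.le, neg_div, neg_inj]
      field_simp
      linear_combination (-ξ) * hvv
    ext z
    simp only [Set.mem_preimage, hA_def, Set.mem_setOf_eq, Set.mem_Iio]
    rw [← heq, lt_div_iff₀ hsp]
    constructor <;> intro h <;> nlinarith [h]
  have hpt : ∀ v : ℝ, ENNReal.ofReal (if 0 < v then (1 / δ) * rexp (-v / δ) else 0) *
      gaussianReal 0 1 (Prod.mk v ⁻¹' A)
      = (Set.Ioi (0:ℝ)).indicator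
          (fun v => ENNReal.ofReal ((1/δ) * rexp (-v/δ) * stdPhi (-(a * Real.sqrt v)))) v := by
    intro v
    by_cases hv : 0 < v
    · rw [if_pos hv, hslice v hv, gaussianReal_Iio,
        Set.indicator_of_mem (Set.mem_Ioi.2 hv), ← ENNReal.ofReal_mul (by positivity)]
    · rw [if_neg hv, Set.indicator_of_notMem (by simpa using hv)]
      simp
  have hfinal : P {ω | ξ * V ω + σ * Real.sqrt (δ * V ω) * Z ω < 0} = ENNReal.ofReal τ := by
    rw [hPE, hprod]
    simp_rw [hpt]
    rw [lintegral_indicator measurableSet_Ioi,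
      ← ofReal_integral_eq_lintegral_ofReal (key_integrableOn δ a hδ)
        (Filter.Eventually.of_forall fun v =>
          mul_nonneg (by positivity) (stdPhi_nonneg _)),
      key_integral δ a hδ, halg]
  refine ⟨hfinal, fun μ => ?_⟩
  have hset : {ω | μ + ξ * V ω + σ * Real.sqrt (δ * V ω) * Z ω < μ}
      = {ω | ξ * V ω + σ * Real.sqrt (δ * V ω) * Z ω < 0} := by
    ext ω
    simp only [Set.mem_setOf_eq]
    constructor <;> intro h <;> linarith
  rw [hset, hfinal]
end

section
/- Let τ ∈ (0,1), δ > 0, μ ∈ ℝ. Let V be exponentially distributed with rate 1/δ and Z an independent standard normal variable, and set ξ = (1 − 2τ)/(τ(1 − τ)) and σ = √(2/(τ(1 − τ))). Then the law of Y = μ + ξ V + σ √(δ V) Z is absolutely continuous with density f_AL(y; μ, δ, τ) = (τ(1 − τ)/δ) · exp(−ρ_τ((y − μ)/δ)), where ρ_τ(x) = x(τ − 1{x<0}). -/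
open MeasureTheory ProbabilityTheory Real Set ENNReal

lemma lintegral_image_eq_lintegral_abs_deriv_mul' {s : Set ℝ} {f f' : ℝ → ℝ}
    (hs : MeasurableSet s) (hf' : ∀ x ∈ s, HasDerivWithinAt f (f' x) s x) (hf : Set.InjOn f s)
    (g : ℝ → ℝ≥0∞) :
    ∫⁻ x in f '' s, g x = ∫⁻ x in s, ENNReal.ofReal |f' x| * g (f x) := by
  simpa only [ContinuousLinearMap.det_toSpanSingleton] using
    lintegral_image_eq_lintegral_abs_det_fderiv_mul volume hs
      (fun x hx => (hf' x hx).hasFDerivWithinAt) hf g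

lemma gauss_lintegral : ∫⁻ u : ℝ, ENNReal.ofReal (exp (-u^2)) = ENNReal.ofReal (Real.sqrt π) := by
  have h := integral_gaussian 1
  rw [div_one] at h
  rw [← h, ofReal_integral_eq_lintegral_ofReal (integrable_exp_neg_mul_sq one_pos)
    (Filter.Eventually.of_forall fun x => (exp_pos _).le)]
  simp only [one_mul, neg_mul]

lemma hasDerivAt_h {p q v : ℝ} (hv : 0 < v) :
    HasDerivAt (fun v => Real.sqrt q * Real.sqrt v - Real.sqrt p / Real.sqrt v)
      (Real.sqrt q / (2 * Real.sqrt v) + Real.sqrt p / (2 * v * Real.sqrt v)) v := by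
  have h1 : HasDerivAt Real.sqrt (1 / (2 * Real.sqrt v)) v := Real.hasDerivAt_sqrt hv.ne'
  have hsv : Real.sqrt v ≠ 0 := (Real.sqrt_pos.mpr hv).ne'
  have h2 : HasDerivAt (fun v => (Real.sqrt v)⁻¹) (-(1 / (2 * Real.sqrt v)) / (Real.sqrt v)^2) v :=
    h1.inv hsv
  have h3 := (h1.const_mul (Real.sqrt q)).sub (h2.const_mul (Real.sqrt p))
  convert h3 using 1
  rotate_left 3
  rw [Real.sq_sqrt hv.le]
  have hv' : v ≠ 0 := hv.ne'
  field_simp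
  ring
  all_goals rfl

lemma h_img {p q : ℝ} (hp : 0 < p) (hq : 0 < q) :
    (fun v => Real.sqrt q * Real.sqrt v - Real.sqrt p / Real.sqrt v) '' (Ioi 0) = univ := by
  apply eq_univ_of_forall
  intro u
  have hq' : (0:ℝ) < Real.sqrt q := Real.sqrt_pos.mpr hq
  have hpq : (0:ℝ) < Real.sqrt (p*q) := Real.sqrt_pos.mpr (mul_pos hp hq)
  set s := Real.sqrt (u^2 + 4 * Real.sqrt (p*q)) with hs
  have hs2 : s^2 = u^2 + 4 * Real.sqrt (p*q) := Real.sq_sqrt (by positivity)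
  have hsu : -u < s := by
    nlinarith [Real.sqrt_nonneg (u^2 + 4 * Real.sqrt (p*q)), abs_nonneg u, sq_abs u,
      neg_abs_le u]
  set w := (u + s) / (2 * Real.sqrt q) with hw
  have hw0 : 0 < w := by
    apply div_pos (by linarith) (by positivity)
  refine ⟨w^2, mem_Ioi.mpr (pow_pos hw0 2), ?_⟩
  have hsw : Real.sqrt (w^2) = w := Real.sqrt_sq hw0.le
  simp only [hsw]
  have hpq' : Real.sqrt (p*q) = Real.sqrt p * Real.sqrt q := Real.sqrt_mul hp.le q
  have hwne : w ≠ 0 := hw0.ne'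
  have hqw : 2 * Real.sqrt q * w = u + s := by rw [hw]; field_simp
  have big : 4*Real.sqrt q * (Real.sqrt q*w*w - u*w - Real.sqrt p) = 0 := by
    linear_combination (2*Real.sqrt q*w + s - u) * hqw + hs2 + 4*hpq'
  have h0 : Real.sqrt q*w*w - u*w - Real.sqrt p = 0 := by
    rcases mul_eq_zero.mp big with h|h
    · exact absurd h (by positivity)
    · exact h
  field_simp
  linarith [h0]

lemma h_inj {p q : ℝ} (hp : 0 < p) (hq : 0 < q) :
    InjOn (fun v => Real.sqrt q * Real.sqrt v - Real.sqrt p / Real.sqrt v) (Ioi 0) := by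
  apply StrictMonoOn.injOn
  intro a ha b hb hab
  have hsa : (0:ℝ) < Real.sqrt a := Real.sqrt_pos.mpr ha
  have hs : Real.sqrt a < Real.sqrt b := Real.sqrt_lt_sqrt (le_of_lt ha) hab
  have h1 : Real.sqrt q * Real.sqrt a ≤ Real.sqrt q * Real.sqrt b :=
    mul_le_mul_of_nonneg_left hs.le (Real.sqrt_nonneg q)
  have h2 : Real.sqrt p / Real.sqrt b < Real.sqrt p / Real.sqrt a :=
    div_lt_div_of_pos_left (Real.sqrt_pos.mpr hp) hsa hs
  simp only
  linarith

lemma recip_sub {p q : ℝ} (hp : 0 < p) (hq : 0 < q) (g : ℝ → ℝ≥0∞) :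
    ∫⁻ v in Ioi (0:ℝ), g v = ∫⁻ v in Ioi (0:ℝ), ENNReal.ofReal (p/(q*v^2)) * g (p/(q*v)) := by
  have himg : (fun v => p/(q*v)) '' (Ioi 0) = Ioi 0 := by
    apply Subset.antisymm
    · rintro y ⟨v, hv, rfl⟩
      have hv' : (0:ℝ) < v := hv
      exact mem_Ioi.mpr (by positivity)
    · intro y hy
      have hy' : (0:ℝ) < y := hy
      refine ⟨p/(q*y), mem_Ioi.mpr (by positivity), ?_⟩
      field_simp
  have hderiv : ∀ v ∈ Ioi (0:ℝ), HasDerivWithinAt (fun v => p/(q*v)) (-(p/(q*v^2))) (Ioi 0) v := by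
    intro v hv
    have hv' : (0:ℝ) < v := hv
    have h1 : HasDerivAt (fun v : ℝ => p/(q*v)) ((0*(q*v) - p*(q*1))/(q*v)^2) v :=
      (hasDerivAt_const v p).div ((hasDerivAt_id v).const_mul q) (by positivity)
    have h2 : (0*(q*v) - p*(q*1))/(q*v)^2 = -(p/(q*v^2)) := by
      field_simp
      ring
    exact (h2 ▸ h1).hasDerivWithinAt
  have hinj : InjOn (fun v => p/(q*v)) (Ioi 0) := by
    intro a ha b hb hab
    have ha' : (0:ℝ) < a := ha
    have hb' : (0:ℝ) < b := hb
    simp only at hab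
    field_simp [hp.ne', hq.ne'] at hab
    exact hab.symm
  have key := lintegral_image_eq_lintegral_abs_deriv_mul' measurableSet_Ioi hderiv hinj g
  rw [himg] at key
  rw [key]
  apply setLIntegral_congr_fun measurableSet_Ioi
  intro v hv
  beta_reduce
  have hv' : (0:ℝ) < v := hv
  rw [abs_neg, abs_of_pos (by positivity)]

lemma bessel {p q : ℝ} (hp : 0 < p) (hq : 0 < q) :
    ∫⁻ v in Ioi (0:ℝ), ENNReal.ofReal ((Real.sqrt v)⁻¹ * exp (-(p/v) - q*v))
      = ENNReal.ofReal (Real.sqrt (π/q) * exp (-(2 * Real.sqrt (p*q)))) := by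
  have hq2 : Real.sqrt q * Real.sqrt q = q := Real.mul_self_sqrt hq.le
  have hp2 : Real.sqrt p * Real.sqrt p = p := Real.mul_self_sqrt hp.le
  set c : ℝ := 2 * Real.sqrt (p*q) with hc
  set e : ℝ → ℝ := fun v => exp (-(p/v) - q*v) with he
  -- J = K by the reciprocal substitution
  have hJK : (∫⁻ v in Ioi (0:ℝ), ENNReal.ofReal (Real.sqrt q / Real.sqrt v * e v))
      = ∫⁻ v in Ioi (0:ℝ), ENNReal.ofReal (Real.sqrt p / (v * Real.sqrt v) * e v) := by
    rw [recip_sub hp hq (fun v => ENNReal.ofReal (Real.sqrt q / Real.sqrt v * e v))]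
    apply setLIntegral_congr_fun measurableSet_Ioi
    intro v hv
    beta_reduce
    have hv' : (0:ℝ) < v := hv
    have hv2 : Real.sqrt v * Real.sqrt v = v := Real.mul_self_sqrt hv'.le
    have hsv : (0:ℝ) < Real.sqrt v := Real.sqrt_pos.mpr hv'
    rw [← ENNReal.ofReal_mul (by positivity)]
    congr 1
    have h2 : e (p/(q*v)) = e v := by
      simp only [he]
      congr 1
      field_simp
      ring
    have h1 : Real.sqrt (p/(q*v)) = Real.sqrt p / (Real.sqrt q * Real.sqrt v) := by
      rw [Real.sqrt_div hp.le, Real.sqrt_mul hq.le]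
    rw [h2, h1]
    have F : p/(q*v^2) * (Real.sqrt q / (Real.sqrt p/(Real.sqrt q*Real.sqrt v)))
        = Real.sqrt p/(v*Real.sqrt v) := by
      field_simp
      linear_combination (p*Real.sqrt v^2)*hq2 + (p*q)*hv2 - (v*q)*hp2
    linear_combination (e v) * F
  -- continue
  have hmJ : Measurable (fun v : ℝ => ENNReal.ofReal (Real.sqrt q / Real.sqrt v * e v)) := by
    apply Measurable.ennreal_ofReal
    simp only [he]
    fun_prop
  have hA : (∫⁻ v in Ioi (0:ℝ),
      ENNReal.ofReal ((Real.sqrt q / Real.sqrt v + Real.sqrt p / (v * Real.sqrt v)) * e v))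
      = ENNReal.ofReal (2 * (Real.sqrt π * exp (-c))) := by
    have key := lintegral_image_eq_lintegral_abs_deriv_mul'
      (f := fun v => Real.sqrt q * Real.sqrt v - Real.sqrt p / Real.sqrt v)
      (f' := fun v => Real.sqrt q / (2*Real.sqrt v) + Real.sqrt p / (2*v*Real.sqrt v))
      measurableSet_Ioi
      (fun v hv => (hasDerivAt_h (p := p) (mem_Ioi.mp hv)).hasDerivWithinAt)
      (h_inj hp hq) (fun u => ENNReal.ofReal (2 * exp (-u^2 - c)))
    rw [h_img hp hq, Measure.restrict_univ] at key
    have lhs : (∫⁻ u : ℝ, ENNReal.ofReal (2 * exp (-u^2 - c)))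
        = ENNReal.ofReal (2 * (Real.sqrt π * exp (-c))) := by
      have hptw : ∀ u : ℝ, (2 : ℝ) * exp (-u^2 - c) = (2 * exp (-c)) * exp (-u^2) := by
        intro u
        rw [mul_assoc, ← Real.exp_add]
        ring_nf
      simp_rw [hptw]
      simp_rw [ENNReal.ofReal_mul (by positivity : (0:ℝ) ≤ 2 * exp (-c))]
      rw [lintegral_const_mul' _ _ ENNReal.ofReal_ne_top, gauss_lintegral,
        ← ENNReal.ofReal_mul (by positivity)]
      ring_nf
    rw [lhs] at key
    rw [key]
    apply setLIntegral_congr_fun measurableSet_Ioi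
    intro v hv
    beta_reduce
    have hv' : (0:ℝ) < v := hv
    have hsv : (0:ℝ) < Real.sqrt v := Real.sqrt_pos.mpr hv'
    have hv2 : Real.sqrt v * Real.sqrt v = v := Real.mul_self_sqrt hv'.le
    have hq' : (0:ℝ) < Real.sqrt q := Real.sqrt_pos.mpr hq
    have hp' : (0:ℝ) < Real.sqrt p := Real.sqrt_pos.mpr hp
    rw [abs_of_pos (by positivity), ← ENNReal.ofReal_mul (by positivity)]
    congr 1
    have hexp : (Real.sqrt q * Real.sqrt v - Real.sqrt p / Real.sqrt v)^2 + c = p/v + q*v := by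
      have ha2 : (Real.sqrt q*Real.sqrt v)^2 = q*v := by
        rw [mul_pow, Real.sq_sqrt hq.le, Real.sq_sqrt hv'.le]
      have hb2 : (Real.sqrt p/Real.sqrt v)^2 = p/v := by
        rw [div_pow, Real.sq_sqrt hp.le, Real.sq_sqrt hv'.le]
      have hab : (Real.sqrt q*Real.sqrt v)*(Real.sqrt p/Real.sqrt v) = Real.sqrt q*Real.sqrt p := by
        field_simp
      have hcc : c = 2*(Real.sqrt q*Real.sqrt p) := by rw [hc, Real.sqrt_mul hp.le]; ring
      linear_combination ha2 + hb2 - 2*hab + hcc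
    have hee : exp (-(Real.sqrt q * Real.sqrt v - Real.sqrt p / Real.sqrt v)^2 - c) = e v := by
      simp only [he]
      congr 1
      linarith [hexp]
    rw [hee]
    ring
  -- split A = J + K and conclude
  have hsplit : (∫⁻ v in Ioi (0:ℝ),
      ENNReal.ofReal ((Real.sqrt q / Real.sqrt v + Real.sqrt p / (v * Real.sqrt v)) * e v))
      = (∫⁻ v in Ioi (0:ℝ), ENNReal.ofReal (Real.sqrt q / Real.sqrt v * e v))
        + ∫⁻ v in Ioi (0:ℝ), ENNReal.ofReal (Real.sqrt p / (v * Real.sqrt v) * e v) := by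
    rw [← lintegral_add_left hmJ]
    apply setLIntegral_congr_fun measurableSet_Ioi
    intro v hv
    beta_reduce
    have hv' : (0:ℝ) < v := hv
    have hsv : (0:ℝ) < Real.sqrt v := Real.sqrt_pos.mpr hv'
    rw [add_mul, ENNReal.ofReal_add (by positivity) (by positivity)]
  have hJ : (∫⁻ v in Ioi (0:ℝ), ENNReal.ofReal (Real.sqrt q / Real.sqrt v * e v))
      = ENNReal.ofReal (Real.sqrt π * exp (-c)) := by
    have h2J : (2:ℝ≥0∞) * (∫⁻ v in Ioi (0:ℝ), ENNReal.ofReal (Real.sqrt q / Real.sqrt v * e v))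
        = 2 * ENNReal.ofReal (Real.sqrt π * exp (-c)) := by
      rw [two_mul]
      nth_rewrite 2 [hJK]
      rw [← hsplit, hA, ENNReal.ofReal_mul (by norm_num : (0:ℝ) ≤ 2), ENNReal.ofReal_ofNat]
    exact (ENNReal.mul_right_inj (by norm_num) (by norm_num)).mp h2J
  -- express J in terms of the target integral
  have hJT : (∫⁻ v in Ioi (0:ℝ), ENNReal.ofReal (Real.sqrt q / Real.sqrt v * e v))
      = ENNReal.ofReal (Real.sqrt q)
        * ∫⁻ v in Ioi (0:ℝ), ENNReal.ofReal ((Real.sqrt v)⁻¹ * e v) := by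
    rw [← lintegral_const_mul' _ _ ENNReal.ofReal_ne_top]
    apply setLIntegral_congr_fun measurableSet_Ioi
    intro v hv
    beta_reduce
    rw [← ENNReal.ofReal_mul (Real.sqrt_nonneg q)]
    congr 1
    rw [div_eq_mul_inv]
    ring
  have hq' : (0:ℝ) < Real.sqrt q := Real.sqrt_pos.mpr hq
  have hqne : ENNReal.ofReal (Real.sqrt q) ≠ 0 := (ENNReal.ofReal_pos.mpr hq').ne'
  have final := hJT ▸ hJ
  have : (∫⁻ v in Ioi (0:ℝ), ENNReal.ofReal ((Real.sqrt v)⁻¹ * e v))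
      = ENNReal.ofReal ((Real.sqrt q)⁻¹ * (Real.sqrt π * exp (-c))) := by
    rw [ENNReal.ofReal_mul (by positivity), ← final, ENNReal.ofReal_inv_of_pos hq', ← mul_assoc,
      ENNReal.inv_mul_cancel hqne ENNReal.ofReal_ne_top, one_mul]
  rw [this]
  congr 1
  rw [Real.sqrt_div pi_pos.le]
  ring


/-- The check (loss) function at level `τ`: `ρ_τ(x) = x(τ - 1{x<0})`. -/
noncomputable def checkLoss (τ x : ℝ) : ℝ := x * (τ - if x < 0 then 1 else 0)

lemma final_const (τ δ : ℝ) (hτ0 : 0 < τ) (hτ1 : τ < 1) (hδ : 0 < δ) (a : ℝ) (ha : a ≠ 0)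
    (σ : ℝ) (hσ : σ = Real.sqrt (2 / (τ * (1 - τ)))) :
    (1/δ) * (σ * Real.sqrt (2*π*δ))⁻¹ * exp (a*(1-2*τ)/(2*δ))
      * (Real.sqrt (π/(1/(4*δ*(τ*(1-τ))))) * exp (-(2 * Real.sqrt ((a^2*(τ*(1-τ))/(4*δ)) * (1/(4*δ*(τ*(1-τ))))))))
    = τ * (1-τ) / δ * exp (-(checkLoss τ (a/δ))) := by
  have ht : 0 < τ * (1-τ) := mul_pos hτ0 (by linarith)
  set t := τ * (1-τ) with htdef
  have hpq : (a^2*t/(4*δ)) * (1/(4*δ*t)) = (|a| / (4*δ))^2 := by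
    rw [div_pow, sq_abs]
    field_simp
  have hs1 : Real.sqrt ((a^2*t/(4*δ)) * (1/(4*δ*t))) = |a|/(4*δ) := by
    rw [hpq, Real.sqrt_sq (by positivity)]
  have hs2 : Real.sqrt (π/(1/(4*δ*t))) = Real.sqrt (4*π*δ*t) := by
    congr 1
    field_simp
  have hσs : σ * Real.sqrt (2*π*δ) = Real.sqrt (4*π*δ/t) := by
    rw [hσ, ← Real.sqrt_mul (by positivity)]
    congr 1
    field_simp
    ring
  have hrat : Real.sqrt (4*π*δ*t) / Real.sqrt (4*π*δ/t) = t := by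
    rw [← Real.sqrt_div (by positivity)]
    rw [show (4*π*δ*t) / (4*π*δ/t) = t^2 from by field_simp]
    exact Real.sqrt_sq ht.le
  rw [hs1, hs2, hσs]
  have hexp : exp (a*(1-2*τ)/(2*δ)) * exp (-(2*(|a|/(4*δ)))) = exp (-(checkLoss τ (a/δ))) := by
    rw [← Real.exp_add]
    congr 1
    rcases lt_or_gt_of_ne ha with h | h
    · rw [abs_of_neg h]
      simp only [checkLoss, if_pos (show a/δ < 0 from div_neg_of_neg_of_pos h hδ)]
      field_simp
      ring
    · rw [abs_of_pos h]
      have : ¬ (a/δ < 0) := not_lt.mpr (by positivity)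
      simp only [checkLoss, if_neg this]
      field_simp
      ring
  calc (1/δ) * (Real.sqrt (4*π*δ/t))⁻¹ * exp (a*(1-2*τ)/(2*δ))
        * (Real.sqrt (4*π*δ*t) * exp (-(2*(|a|/(4*δ)))))
      = (1/δ) * (Real.sqrt (4*π*δ*t) / Real.sqrt (4*π*δ/t))
          * (exp (a*(1-2*τ)/(2*δ)) * exp (-(2*(|a|/(4*δ))))) := by ring
    _ = t/δ * exp (-(checkLoss τ (a/δ))) := by rw [hrat, hexp]; ring
    _ = τ * (1-τ)/δ * exp (-(checkLoss τ (a/δ))) := by rw [htdef]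

lemma inner_calc (τ δ μ ξ σ : ℝ) (hτ0 : 0 < τ) (hτ1 : τ < 1) (hδ : 0 < δ)
    (hξ : ξ = (1 - 2*τ)/(τ*(1-τ))) (hσ : σ = Real.sqrt (2/(τ*(1-τ))))
    (y : ℝ) (hy : y ≠ μ) :
    (∫⁻ v in Ioi (0:ℝ), ENNReal.ofReal ((1/δ) * exp (-v/δ))
        * ENNReal.ofReal ((Real.sqrt (2*π*(σ^2*δ*v)))⁻¹ * exp (-(y - (μ + ξ*v))^2 / (2*(σ^2*δ*v)))))
      = ENNReal.ofReal (τ*(1-τ)/δ * exp (-(checkLoss τ ((y-μ)/δ)))) := by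
  have ht : 0 < τ*(1-τ) := mul_pos hτ0 (by linarith)
  have ha : y - μ ≠ 0 := sub_ne_zero.mpr hy
  have ha2 : 0 < (y-μ)^2 := by positivity
  have hσpos : 0 < σ := by rw [hσ]; exact Real.sqrt_pos.mpr (by positivity)
  have hσ2 : σ^2 = 2/(τ*(1-τ)) := by rw [hσ, Real.sq_sqrt (by positivity)]
  have hp : 0 < (y-μ)^2*(τ*(1-τ))/(4*δ) := by positivity
  have hq : 0 < 1/(4*δ*(τ*(1-τ))) := by positivity
  have hstep : ∀ v ∈ Ioi (0:ℝ), ENNReal.ofReal ((1/δ) * exp (-v/δ))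
        * ENNReal.ofReal ((Real.sqrt (2*π*(σ^2*δ*v)))⁻¹ * exp (-(y - (μ + ξ*v))^2 / (2*(σ^2*δ*v))))
      = ENNReal.ofReal ((1/δ) * (σ * Real.sqrt (2*π*δ))⁻¹ * exp ((y-μ)*(1-2*τ)/(2*δ)))
        * ENNReal.ofReal ((Real.sqrt v)⁻¹
            * exp (-(((y-μ)^2*(τ*(1-τ))/(4*δ))/v) - (1/(4*δ*(τ*(1-τ))))*v)) := by
    intro v hv
    have hv' : (0:ℝ) < v := hv
    have hsv : (0:ℝ) < Real.sqrt v := Real.sqrt_pos.mpr hv'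
    rw [← ENNReal.ofReal_mul (by positivity), ← ENNReal.ofReal_mul (by positivity)]
    congr 1
    have hsq : Real.sqrt (2*π*(σ^2*δ*v)) = σ * Real.sqrt (2*π*δ) * Real.sqrt v := by
      rw [show 2*π*(σ^2*δ*v) = (σ^2) * ((2*π*δ)*v) from by ring, Real.sqrt_mul (sq_nonneg σ),
        Real.sqrt_sq hσpos.le, Real.sqrt_mul (by positivity)]
      ring
    have hexp : exp (-v/δ) * exp (-(y - (μ + ξ*v))^2 / (2*(σ^2*δ*v)))
        = exp ((y-μ)*(1-2*τ)/(2*δ))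
          * exp (-(((y-μ)^2*(τ*(1-τ))/(4*δ))/v) - (1/(4*δ*(τ*(1-τ))))*v) := by
      rw [← Real.exp_add, ← Real.exp_add]
      congr 1
      rw [hσ2, hξ]
      have h1τ : (1:ℝ) - τ ≠ 0 := by linarith
      field_simp
      ring
    rw [hsq]
    linear_combination ((1/δ) * (σ * Real.sqrt (2*π*δ) * Real.sqrt v)⁻¹) * hexp
  rw [setLIntegral_congr_fun measurableSet_Ioi hstep,
    lintegral_const_mul' _ _ ENNReal.ofReal_ne_top, bessel hp hq,
    ← ENNReal.ofReal_mul (by positivity)]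
  congr 1
  exact final_const τ δ hτ0 hτ1 hδ (y-μ) ha σ hσ

/-- Gaussian location-scale mixture representation of the univariate Asymmetric Laplace
distribution: if `V ~ Exp(1/δ)`, `Z ~ N(0,1)` independent of `V`,
`ξ = (1-2τ)/(τ(1-τ))`, `σ = √(2/(τ(1-τ)))`, then `Y = μ + ξV + σ√(δV) Z` has the
Asymmetric Laplace density `f_AL(y; μ, δ, τ) = (τ(1-τ)/δ) exp(-ρ_τ((y-μ)/δ))`. -/
theorem al_mixture_density {Ω : Type*} [MeasurableSpace Ω]
    (P : Measure Ω) [IsProbabilityMeasure P]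
    (τ δ μ : ℝ) (hτ : τ ∈ Set.Ioo (0 : ℝ) 1) (hδ : 0 < δ)
    (V Z : Ω → ℝ) (hV : Measurable V) (hZ : Measurable Z)
    (hVlaw : P.map V =
      volume.withDensity (fun v => ENNReal.ofReal (if 0 < v then (1 / δ) * exp (-v / δ) else 0)))
    (hZlaw : P.map Z = gaussianReal 0 1)
    (hindep : IndepFun V Z P)
    (ξ σ : ℝ)
    (hξ : ξ = (1 - 2 * τ) / (τ * (1 - τ)))
    (hσ : σ = Real.sqrt (2 / (τ * (1 - τ))))
    (Y : Ω → ℝ) (hY : ∀ ω, Y ω = μ + ξ * V ω + σ * Real.sqrt (δ * V ω) * Z ω) :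
    P.map Y = volume.withDensity
      (fun y => ENNReal.ofReal (τ * (1 - τ) / δ * exp (-(checkLoss τ ((y - μ) / δ))))) := by
  obtain ⟨hτ0, hτ1⟩ := hτ
  have ht : 0 < τ*(1-τ) := mul_pos hτ0 (by linarith)
  have hσpos : 0 < σ := by rw [hσ]; exact Real.sqrt_pos.mpr (by positivity)
  set fV : ℝ → ℝ≥0∞ := fun v => ENNReal.ofReal (if 0 < v then (1 / δ) * exp (-v / δ) else 0)
    with hfV
  have hfVm : Measurable fV := by
    apply Measurable.ennreal_ofReal
    apply Measurable.ite measurableSet_Ioi <;> fun_prop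
  have hVZ : P.map (fun ω => (V ω, Z ω)) = (volume.withDensity fV).prod (gaussianReal 0 1) := by
    rw [← hVlaw, ← hZlaw]
    exact (ProbabilityTheory.indepFun_iff_map_prod_eq_prod_map_map
      hV.aemeasurable hZ.aemeasurable).mp hindep
  set g : ℝ × ℝ → ℝ := fun x => μ + ξ * x.1 + σ * Real.sqrt (δ * x.1) * x.2 with hg
  have hgm : Measurable g := by
    apply Measurable.add
    · fun_prop
    · apply Measurable.mul
      · apply Measurable.mul measurable_const
        exact (Real.continuous_sqrt.measurable).comp (measurable_fst.const_mul δ)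
      · exact measurable_snd
  have hmap : P.map Y = ((volume.withDensity fV).prod (gaussianReal 0 1)).map g := by
    have hYg : Y = g ∘ (fun ω => (V ω, Z ω)) := funext fun ω => hY ω
    rw [hYg, ← Measure.map_map hgm (hV.prodMk hZ), hVZ]
  rw [hmap]
  ext s hs
  rw [Measure.map_apply hgm hs, withDensity_apply _ hs, Measure.prod_apply (hgm hs),
    lintegral_withDensity_eq_lintegral_mul volume hfVm
      (measurable_measure_prodMk_left (hgm hs))]
  -- restrict to Ioi 0
  have h1 : (∫⁻ v, (fV * fun v => (gaussianReal 0 1) (Prod.mk v ⁻¹' (g ⁻¹' s))) v)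
      = ∫⁻ v in Ioi 0, ENNReal.ofReal ((1/δ) * exp (-v/δ))
          * (gaussianReal 0 1) (Prod.mk v ⁻¹' (g ⁻¹' s)) := by
    rw [← lintegral_indicator measurableSet_Ioi]
    apply lintegral_congr
    intro v
    by_cases h : 0 < v
    · simp [hfV, indicator, h, one_div]
    · simp [hfV, indicator, h]
  rw [h1]
  have hFv : ∀ v ∈ Ioi (0:ℝ), (gaussianReal 0 1) (Prod.mk v ⁻¹' (g ⁻¹' s))
      = ∫⁻ y in s, ENNReal.ofReal ((Real.sqrt (2*π*(σ^2*δ*v)))⁻¹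
          * exp (-(y - (μ + ξ*v))^2 / (2*(σ^2*δ*v)))) := by
    intro v hv
    have hv' : (0:ℝ) < v := hv
    have hδv : (0:ℝ) < δ * v := by positivity
    have hset : Prod.mk v ⁻¹' (g ⁻¹' s) = (fun z => σ * Real.sqrt (δ*v) * z + (μ + ξ*v)) ⁻¹' s := by
      ext z
      simp only [mem_preimage, hg]
      rw [show σ*Real.sqrt (δ*v)*z + (μ + ξ*v) = μ + ξ*v + σ*Real.sqrt (δ*v)*z from by ring]
    have hvar : ((σ*Real.sqrt (δ*v))^2 : ℝ) = σ^2*δ*v := by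
      rw [mul_pow, Real.sq_sqrt hδv.le]; ring
    have hmapz : (gaussianReal 0 1).map (fun z => σ*Real.sqrt (δ*v)*z + (μ+ξ*v))
        = gaussianReal (μ+ξ*v) ((σ^2*δ*v).toNNReal) := by
      have hcomp : (fun z : ℝ => σ*Real.sqrt (δ*v)*z + (μ+ξ*v))
          = (fun x => x + (μ+ξ*v)) ∘ (fun z => (σ*Real.sqrt (δ*v)) * z) := rfl
      rw [hcomp, ← Measure.map_map (measurable_add_const _) (measurable_const_mul _),
        gaussianReal_map_const_mul, gaussianReal_map_add_const]
      congr 1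
      · ring
      · rw [mul_one]
        ext
        push_cast
        rw [Real.coe_toNNReal _ (by positivity)]
        exact hvar
    rw [hset, ← Measure.map_apply (by fun_prop) hs, hmapz]
    have hvarne : ((σ^2*δ*v).toNNReal) ≠ 0 := by
      rw [Ne, Real.toNNReal_eq_zero, not_le]; positivity
    rw [gaussianReal_apply _ hvarne s]
    apply setLIntegral_congr_fun hs
    intro y _
    simp only [gaussianPDF, gaussianPDFReal]
    rw [Real.coe_toNNReal _ (by positivity)]
  rw [setLIntegral_congr_fun measurableSet_Ioi (fun v hv => by rw [hFv v hv])]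
  have hker : Measurable (fun p : ℝ × ℝ => ENNReal.ofReal ((1/δ) * exp (-p.1/δ))
      * ENNReal.ofReal ((Real.sqrt (2*π*(σ^2*δ*p.1)))⁻¹
          * exp (-(p.2 - (μ + ξ*p.1))^2 / (2*(σ^2*δ*p.1))))) := by
    fun_prop
  have hae : ∀ᵐ (y : ℝ) ∂(volume : Measure ℝ), y ≠ μ := by
    rw [ae_iff]
    have : {y : ℝ | ¬ y ≠ μ} = {μ} := by ext y; simp
    rw [this]
    exact measure_singleton μ
  calc ∫⁻ v in Ioi (0:ℝ), ENNReal.ofReal ((1/δ) * exp (-v/δ))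
        * ∫⁻ y in s, ENNReal.ofReal ((Real.sqrt (2*π*(σ^2*δ*v)))⁻¹
            * exp (-(y - (μ + ξ*v))^2 / (2*(σ^2*δ*v))))
      = ∫⁻ v in Ioi (0:ℝ), ∫⁻ y in s, ENNReal.ofReal ((1/δ) * exp (-v/δ))
          * ENNReal.ofReal ((Real.sqrt (2*π*(σ^2*δ*v)))⁻¹
              * exp (-(y - (μ + ξ*v))^2 / (2*(σ^2*δ*v)))) := by
        apply lintegral_congr
        intro v
        rw [← lintegral_const_mul' _ _ ENNReal.ofReal_ne_top]
    _ = ∫⁻ y in s, ∫⁻ v in Ioi (0:ℝ), ENNReal.ofReal ((1/δ) * exp (-v/δ))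
          * ENNReal.ofReal ((Real.sqrt (2*π*(σ^2*δ*v)))⁻¹
              * exp (-(y - (μ + ξ*v))^2 / (2*(σ^2*δ*v)))) :=
        lintegral_lintegral_swap hker.aemeasurable
    _ = ∫⁻ y in s, ENNReal.ofReal (τ * (1 - τ) / δ * exp (-(checkLoss τ ((y - μ) / δ)))) := by
        apply setLIntegral_congr_fun_ae hs
        filter_upwards [hae] with y hyμ _
        exact inner_calc τ δ μ ξ σ hτ0 hτ1 hδ hξ hσ y hyμ
end

section
/- Let τ ∈ (0,1), δ > 0, μ ∈ ℝ, and let Y be a real random variable with density f_AL(y; μ, δ, τ) = (τ(1 − τ)/δ) exp(−ρ_τ((y − μ)/δ)), where ρ_τ(x) = x(τ − 1{x<0}). Then the random variable ρ_τ((Y − μ)/δ) is exponentially distributed with rate 1, i.e., the pushforward of the law of Y under the map y ↦ ρ_τ((y − μ)/δ) is the standard exponential distribution: for every t ≥ 0, P(ρ_τ((Y − μ)/δ) > t) = e^{−t}. -/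
open MeasureTheory Real Set

lemma lintA (c k a : ℝ) (hk : 0 < k) (hc : 0 ≤ c) :
    ∫⁻ x in Ioi a, ENNReal.ofReal (c * exp (-(k * x))) =
      ENNReal.ofReal (c * exp (-(k * a)) / k) := by
  have hint : IntegrableOn (fun x : ℝ => c * exp (-(k * x))) (Ioi a) := by
    simpa [neg_mul, IntegrableOn] using (exp_neg_integrableOn_Ioi a hk).const_mul c
  rw [← ofReal_integral_eq_lintegral_ofReal hint
      (Filter.Eventually.of_forall fun x => by positivity)]
  congr 1
  rw [integral_const_mul]
  have h2 := integral_comp_mul_left_Ioi (fun x => exp (-x)) a hk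
  simp only [smul_eq_mul] at h2
  rw [show (∫ x in Ioi a, exp (-(k * x))) = ∫ x in Ioi a, (fun y => exp (-y)) (k * x) from rfl,
    h2, integral_exp_neg_Ioi]
  field_simp

lemma lintB (c k b : ℝ) (hk : 0 < k) (hc : 0 ≤ c) :
    ∫⁻ x in Iio b, ENNReal.ofReal (c * exp (k * x)) =
      ENNReal.ofReal (c * exp (k * b) / k) := by
  have hmp : MeasurePreserving (fun x : ℝ => -x) volume volume :=
    Measure.measurePreserving_neg _
  have hemb : MeasurableEmbedding (fun x : ℝ => -x) := measurableEmbedding_neg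
  have hpre : (fun x : ℝ => -x) ⁻¹' (Ioi (-b)) = Iio b := by ext x; simp
  have := hmp.setLIntegral_comp_preimage_emb hemb
    (fun y => ENNReal.ofReal (c * exp (-(k * y)))) (Ioi (-b))
  rw [hpre] at this
  simp only [mul_neg, neg_neg] at this
  rw [this, lintA c k (-b) hk hc]
  simp [neg_neg, mul_neg]

/-- If `Y` has the Asymmetric Laplace density `f_AL(y; μ, δ, τ)`, then
`ρ_τ((Y-μ)/δ)` is standard exponential: `P(ρ_τ((Y-μ)/δ) > t) = e^{-t}` for all `t ≥ 0`. -/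
theorem al_check_exponential {Ω : Type*} [MeasurableSpace Ω]
    (P : Measure Ω) [IsProbabilityMeasure P]
    (τ δ μ : ℝ) (hτ : τ ∈ Set.Ioo (0 : ℝ) 1) (hδ : 0 < δ)
    (Y : Ω → ℝ) (hY : Measurable Y)
    (hYlaw : P.map Y = volume.withDensity
      (fun y => ENNReal.ofReal (τ * (1 - τ) / δ * exp (-(checkLoss τ ((y - μ) / δ)))))) :
    ∀ t : ℝ, 0 ≤ t →
      P {ω | t < checkLoss τ ((Y ω - μ) / δ)} = ENNReal.ofReal (exp (-t)) := by

  obtain ⟨hτ0, hτ1⟩ := hτ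
  have h1τ : 0 < 1 - τ := by linarith
  intro t ht
  set a : ℝ := μ - δ * t / (1 - τ) with ha
  set b : ℝ := μ + δ * t / τ with hb
  have hab : a ≤ b := by
    have h1 : 0 ≤ δ * t / (1 - τ) := by positivity
    have h2 : 0 ≤ δ * t / τ := by positivity
    simp only [ha, hb]; linarith
  have hset : {y : ℝ | t < checkLoss τ ((y - μ) / δ)} = Iio a ∪ Ioi b := by
    ext y
    simp only [checkLoss, mem_setOf_eq, mem_union, mem_Iio, mem_Ioi]
    by_cases hx : (y - μ) / δ < 0
    · rw [if_pos hx]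
      have hyμ : y < μ := by
        rcases div_neg_iff.mp hx with ⟨_, h⟩ | ⟨h, _⟩ <;> linarith
      have hbm : μ ≤ b := by
        have : 0 ≤ δ * t / τ := by positivity
        simp only [hb]; linarith
      constructor
      · intro hlt
        left
        rw [div_mul_eq_mul_div, lt_div_iff₀ hδ] at hlt
        have h2 : δ * t / (1 - τ) < μ - y := by
          rw [div_lt_iff₀ h1τ]; nlinarith
        simp only [ha]; linarith
      · rintro (h | h)
        · simp only [ha] at h
          have h2 : δ * t < (μ - y) * (1 - τ) := by
            rw [← div_lt_iff₀ h1τ]; linarith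
          rw [div_mul_eq_mul_div, lt_div_iff₀ hδ]
          nlinarith
        · linarith
    · rw [if_neg hx]
      push_neg at hx
      have hyμ : μ ≤ y := by
        rcases (div_nonneg_iff.mp hx) with ⟨h, _⟩ | ⟨_, h⟩ <;> linarith
      have ham : a ≤ μ := by
        have : 0 ≤ δ * t / (1 - τ) := by positivity
        simp only [ha]; linarith
      constructor
      · intro hlt
        right
        rw [sub_zero, div_mul_eq_mul_div, lt_div_iff₀ hδ] at hlt
        have h2 : δ * t / τ < y - μ := by
          rw [div_lt_iff₀ hτ0]; nlinarith
        simp only [hb]; linarith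
      · rintro (h | h)
        · linarith
        · simp only [hb] at h
          have h2 : δ * t < (y - μ) * τ := by
            rw [← div_lt_iff₀ hτ0]; linarith
          rw [sub_zero, div_mul_eq_mul_div, lt_div_iff₀ hδ]
          nlinarith
  have hmeas : MeasurableSet (Iio a ∪ Ioi b) :=
    measurableSet_Iio.union measurableSet_Ioi
  have hY' : {ω | t < checkLoss τ ((Y ω - μ) / δ)} = Y ⁻¹' (Iio a ∪ Ioi b) := by
    ext ω
    have := Set.ext_iff.mp hset (Y ω)
    simpa using this
  rw [hY', ← Measure.map_apply hY hmeas, hYlaw, withDensity_apply _ hmeas,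
    lintegral_union measurableSet_Ioi ((Iio_disjoint_Ici hab).mono_right Ioi_subset_Ici_self)]
  set c : ℝ := τ * (1 - τ) / δ with hc
  have hc0 : 0 ≤ c := by positivity
  have hIio : ∫⁻ y in Iio a, ENNReal.ofReal (c * exp (-(checkLoss τ ((y - μ) / δ)))) =
      ENNReal.ofReal (τ * exp (-t)) := by
    rw [setLIntegral_congr_fun measurableSet_Iio
      (fun y (hy : y < a) => by
        have ham : a ≤ μ := by
          have : 0 ≤ δ * t / (1 - τ) := by positivity
          simp only [ha]; linarith
        have hx : (y - μ) / δ < 0 := div_neg_of_neg_of_pos (by linarith) hδ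
        show ENNReal.ofReal (c * exp (-(checkLoss τ ((y - μ) / δ)))) =
          ENNReal.ofReal ((c * exp ((τ - 1) * μ / δ)) * exp ((1 - τ) / δ * y))
        rw [checkLoss, if_pos hx]
        congr 1
        rw [mul_assoc, ← exp_add]
        congr 2
        field_simp
        ring)]
    rw [lintB _ _ _ (by positivity) (by positivity)]
    congr 1
    rw [mul_assoc, ← exp_add]
    have : (τ - 1) * μ / δ + (1 - τ) / δ * a = -t := by
      simp only [ha]; field_simp; ring
    rw [this, hc]
    field_simp
  have hIoi : ∫⁻ y in Ioi b, ENNReal.ofReal (c * exp (-(checkLoss τ ((y - μ) / δ)))) =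
      ENNReal.ofReal ((1 - τ) * exp (-t)) := by
    rw [setLIntegral_congr_fun measurableSet_Ioi
      (fun y (hy : b < y) => by
        have hbm : μ ≤ b := by
          have : 0 ≤ δ * t / τ := by positivity
          simp only [hb]; linarith
        have hx : ¬ ((y - μ) / δ < 0) := by
          push_neg
          exact div_nonneg (by linarith) hδ.le
        show ENNReal.ofReal (c * exp (-(checkLoss τ ((y - μ) / δ)))) =
          ENNReal.ofReal ((c * exp (τ * μ / δ)) * exp (-(τ / δ * y)))
        rw [checkLoss, if_neg hx]
        congr 1
        rw [mul_assoc, ← exp_add]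
        congr 2
        field_simp
        ring)]
    rw [lintA _ _ _ (by positivity) (by positivity)]
    congr 1
    rw [mul_assoc, ← exp_add]
    have : τ * μ / δ + -(τ / δ * b) = -t := by
      simp only [hb]; field_simp; ring
    rw [this, hc]
    field_simp
  rw [hIio, hIoi, ← ENNReal.ofReal_add (by positivity) (by positivity)]
  congr 1
  ring
end

section
/- For all a > 0, b > 0 and p ∈ ℝ, ∫₀^∞ x^{p−1} exp(−(a x + b/x)/2) dx = 2 (b/a)^{p/2} K_p(√(a b)), where K_p(x) = ∫₀^∞ e^{−x cosh t} cosh(p t) dt. -/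
open Real MeasureTheory

/-- The modified Bessel function of the third kind, via the integral representation
`K_ν(x) = ∫₀^∞ e^{-x cosh t} cosh(ν t) dt`. -/
noncomputable def besselK (ν x : ℝ) : ℝ :=
  ∫ t in Set.Ioi (0 : ℝ), exp (-x * cosh t) * cosh (ν * t)

-- quadratic lower bound on cosh
lemma cosh_quad_lb (t : ℝ) : |t| ^ 2 / 8 ≤ Real.cosh t := by
  have e1 : |t| / 2 + 1 ≤ exp (|t| / 2) := Real.add_one_le_exp _
  have e1' : (|t| / 2 + 1) ^ 2 ≤ exp (|t| / 2) ^ 2 := by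
    have h0 : (0:ℝ) ≤ |t| / 2 + 1 := by positivity
    exact pow_le_pow_left₀ h0 e1 2
  have e2 : exp (|t| / 2) ^ 2 = exp |t| := by
    rw [sq, ← Real.exp_add]; ring_nf
  have e3 : exp |t| ≤ 2 * Real.cosh t := by
    rw [← Real.cosh_abs, Real.cosh_eq]
    have := Real.exp_pos (-|t|)
    linarith
  nlinarith [abs_nonneg t]

lemma exp_bound (c p t : ℝ) (hc : 0 < c) :
    p * t - c * Real.cosh t ≤ 2 * (|p| + 1) ^ 2 / c - |t| := by
  have h8 := cosh_quad_lb t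
  have hpt : p * t ≤ |p| * |t| := by
    calc p * t ≤ |p * t| := le_abs_self _
    _ = |p| * |t| := abs_mul _ _
  have hdiv : 2 * (|p| + 1) ^ 2 / c * c = 2 * (|p| + 1) ^ 2 := div_mul_cancel₀ _ hc.ne'
  nlinarith [sq_nonneg (c * |t| - 4 * (|p| + 1)), abs_nonneg t, abs_nonneg p, hc,
    mul_le_mul_of_nonneg_left h8 (mul_pos hc hc).le, hdiv, hpt]

lemma integrable_exp_neg_abs' : Integrable (fun t : ℝ => exp (-|t|)) := by
  have int_Ioi : IntegrableOn (fun t : ℝ => exp (-|t|)) (Set.Ioi 0) := by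
    have h := exp_neg_integrableOn_Ioi 0 (one_pos)
    refine (h.congr_fun (fun x hx => ?_) measurableSet_Ioi)
    rw [abs_of_pos hx]; ring_nf
  have int_Iic : IntegrableOn (fun t : ℝ => exp (-|t|)) (Set.Iic 0) := by
    rw [← Measure.map_neg_eq_self (volume : Measure ℝ)]
    have m : MeasurableEmbedding fun x : ℝ => -x := (Homeomorph.neg ℝ).measurableEmbedding
    rw [m.integrableOn_map_iff]
    simp_rw [Function.comp_def, abs_neg, Set.neg_preimage, Set.neg_Iic, neg_zero]
    exact (integrableOn_Ici_iff_integrableOn_Ioi).mpr int_Ioi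
  rw [← integrableOn_univ, ← Set.Iic_union_Ioi (a := (0:ℝ))]
  exact int_Iic.union int_Ioi

lemma integrable_main (c p : ℝ) (hc : 0 < c) :
    Integrable (fun t : ℝ => exp (p * t) * exp (-c * Real.cosh t)) := by
  refine Integrable.mono' (integrable_exp_neg_abs'.const_mul (exp (2 * (|p| + 1) ^ 2 / c)))
    ?_ (Filter.Eventually.of_forall fun t => ?_)
  · exact (Continuous.mul (by continuity) (by continuity)).aestronglyMeasurable
  · rw [Real.norm_eq_abs, abs_of_pos (by positivity), ← Real.exp_add, ← Real.exp_add]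
    apply Real.exp_le_exp.mpr
    have := exp_bound c p t hc
    linarith

set_option maxHeartbeats 1000000 in
/-- Normalizing constant of the Generalized Inverse Gaussian distribution:
`∫₀^∞ x^{p-1} e^{-(ax + b/x)/2} dx = 2 (b/a)^{p/2} K_p(√(ab))` for `a, b > 0`. -/
theorem gig_normalizing_constant (a b p : ℝ) (ha : 0 < a) (hb : 0 < b) :
    ∫ x in Set.Ioi (0 : ℝ), x ^ (p - 1) * exp (-(a * x + b / x) / 2) =
      2 * (b / a) ^ (p / 2) * besselK p (Real.sqrt (a * b)) := by
  set c := Real.sqrt (a * b) with hcdef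
  set r := Real.sqrt (b / a) with hrdef
  have hc : 0 < c := Real.sqrt_pos.mpr (mul_pos ha hb)
  have hr : 0 < r := Real.sqrt_pos.mpr (div_pos hb ha)
  have har : a * r = c := by
    have h2 : (a * r) ^ 2 = c ^ 2 := by
      rw [mul_pow, hrdef, hcdef, Real.sq_sqrt (div_pos hb ha).le,
        Real.sq_sqrt (mul_pos ha hb).le]
      field_simp
      try ring
    rw [← Real.sqrt_sq (mul_pos ha hr).le, h2, Real.sqrt_sq hc.le]
  have hbr : b / r = c := by
    have h2 : (b / r) ^ 2 = c ^ 2 := by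
      rw [div_pow, hrdef, hcdef, Real.sq_sqrt (div_pos hb ha).le,
        Real.sq_sqrt (mul_pos ha hb).le]
      field_simp
      try ring
    rw [← Real.sqrt_sq (div_pos hb hr).le, h2, Real.sqrt_sq hc.le]
  -- change of variables
  have himg : (fun t : ℝ => r * exp t) '' Set.univ = Set.Ioi 0 := by
    ext x
    simp only [Set.image_univ, Set.mem_range, Set.mem_Ioi]
    constructor
    · rintro ⟨t, rfl⟩; positivity
    · intro hx
      refine ⟨Real.log (x / r), ?_⟩
      rw [Real.exp_log (by positivity)]
      field_simp
  have hcv := integral_image_eq_integral_abs_deriv_smul (f := fun t => r * exp t)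
    (f' := fun t => r * exp t) MeasurableSet.univ
    (fun t _ => ((Real.hasDerivAt_exp t).const_mul r).hasDerivWithinAt)
    (fun x _ y _ h => Real.exp_injective (mul_left_cancel₀ hr.ne' h))
    (fun x => x ^ (p - 1) * exp (-(a * x + b / x) / 2))
  rw [himg] at hcv
  rw [hcv, MeasureTheory.setIntegral_univ]
  have hpoint : ∀ t : ℝ, |r * exp t| • ((r * exp t) ^ (p - 1) *
      exp (-(a * (r * exp t) + b / (r * exp t)) / 2)) =
      (b / a) ^ (p / 2) * (exp (p * t) * exp (-c * Real.cosh t)) := by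
    intro t
    have he : (0:ℝ) < exp t := Real.exp_pos t
    rw [abs_of_pos (by positivity), smul_eq_mul]
    rw [Real.mul_rpow hr.le he.le]
    rw [show exp t ^ (p - 1) = exp ((p - 1) * t) by rw [mul_comm, Real.exp_mul]]
    have h1 : a * (r * exp t) = c * exp t := by rw [← mul_assoc, har]
    have h2 : b / (r * exp t) = c * exp (-t) := by
      rw [Real.exp_neg, div_mul_eq_div_div, hbr, div_eq_mul_inv]
    rw [h1, h2]
    have h3 : -(c * exp t + c * exp (-t)) / 2 = -c * Real.cosh t := by
      rw [Real.cosh_eq]; ring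
    rw [h3]
    have h4 : exp t * exp ((p - 1) * t) = exp (p * t) := by
      rw [← Real.exp_add]; ring_nf
    have h4' : r * r ^ (p - 1) = r ^ p := by
      have h := Real.rpow_add hr 1 (p - 1)
      rw [Real.rpow_one] at h
      rw [← h]; congr 1; ring
    have h5 : r ^ p = (b / a) ^ (p / 2) := by
      rw [hrdef, Real.sqrt_eq_rpow, ← Real.rpow_mul (div_pos hb ha).le]
      congr 1; ring
    rw [← h5, ← h4', ← h4]
    ring
  simp_rw [hpoint]
  rw [integral_const_mul]
  -- symmetrize
  have hint := integrable_main c p hc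
  have hintneg := integrable_main c (-p) hc
  have hflip : ∫ t : ℝ, exp (-p * t) * exp (-c * Real.cosh t) =
      ∫ t : ℝ, exp (p * t) * exp (-c * Real.cosh t) := by
    rw [← MeasureTheory.integral_neg_eq_self (fun t : ℝ => exp (p * t) * exp (-c * Real.cosh t))]
    congr 1; funext t
    rw [Real.cosh_neg]; ring_nf
  have hcosh : ∫ t : ℝ, exp (p * t) * exp (-c * Real.cosh t) =
      ∫ t : ℝ, exp (-c * Real.cosh t) * Real.cosh (p * t) := by
    have : (fun t : ℝ => exp (-c * Real.cosh t) * Real.cosh (p * t)) =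
        fun t : ℝ => (exp (p * t) * exp (-c * Real.cosh t) +
          exp (-p * t) * exp (-c * Real.cosh t)) / 2 := by
      funext t
      simp only [Real.cosh_eq]
      ring_nf
    rw [this, integral_div, integral_add hint hintneg, hflip]
    ring
  rw [hcosh]
  -- fold to Ioi via evenness
  have heven : ∫ t : ℝ, exp (-c * Real.cosh t) * Real.cosh (p * t) =
      2 * besselK p c := by
    rw [besselK, ← integral_comp_abs (f := fun s => exp (-c * Real.cosh s) * Real.cosh (p * s))]
    congr 1; funext t
    rw [Real.cosh_abs, show Real.cosh (p * |t|) = Real.cosh (p * t) by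
      rw [← Real.cosh_abs (p * |t|), abs_mul, abs_abs, ← abs_mul, Real.cosh_abs]]
  rw [heven]
  ring
end

section
/- Let a > 0, b > 0 and ν ∈ ℝ. Then (∫₀^∞ x^{ν−2} e^{−(a x + b/x)/2} dx) / (∫₀^∞ x^{ν−1} e^{−(a x + b/x)/2} dx) = √(a/b) · K_{ν+1}(√(a b)) / K_ν(√(a b)) − 2ν/b, where K_ν(x) = ∫₀^∞ e^{−x cosh t} cosh(ν t) dt. That is, the inverse moment of W ~ GIG(ν, a, b) equals √(a/b) K_{ν+1}(√(ab))/K_ν(√(ab)) − 2ν/b. -/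
open Real MeasureTheory

open Set Filter Topology

private lemma sq_div_two_le_cosh (t : ℝ) : t ^ 2 / 2 ≤ Real.cosh t := by
  have key : ∀ s : ℝ, 0 ≤ s → s ^ 2 / 2 ≤ Real.cosh s := by
    intro s hs
    have h1 : s / 2 ≤ Real.sinh (s / 2) := Real.self_le_sinh_iff.2 (by linarith)
    have h2 := Real.cosh_sq (s / 2)
    have h3 := Real.cosh_two_mul (s / 2)
    rw [show (2:ℝ) * (s/2) = s by ring] at h3
    nlinarith
  rcases le_total 0 t with h | h
  · exact key t h
  · have := key (-t) (by linarith)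
    simpa [Real.cosh_neg, neg_sq] using this

private lemma exponent_bound {c : ℝ} (hc : 0 < c) (μ t : ℝ) :
    μ * t - c * Real.cosh t ≤ μ * t - c / 2 * t ^ 2 := by
  nlinarith [sq_div_two_le_cosh t]

private lemma integrable_rexp_quad {c : ℝ} (hc : 0 < c) (μ : ℝ) :
    Integrable (fun t : ℝ => exp (μ * t - c * t ^ 2)) := by
  have h := (integrable_cexp_quadratic (b := (c:ℂ)) (by simpa using hc) (μ:ℂ) 0).norm
  refine h.congr (Eventually.of_forall fun t => ?_)
  show ‖Complex.exp _‖ = _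
  rw [show (-(c:ℂ) * (t:ℂ) ^ 2 + (μ:ℂ) * (t:ℂ) + 0) = ((μ * t - c * t ^ 2 : ℝ) : ℂ) by
    push_cast; ring, Complex.norm_exp, Complex.ofReal_re]

private lemma integrable_g {c : ℝ} (hc : 0 < c) (μ : ℝ) :
    Integrable (fun t : ℝ => exp (μ * t - c * Real.cosh t)) := by
  refine (integrable_rexp_quad (half_pos hc) μ).mono' ?_ (Eventually.of_forall fun t => ?_)
  · exact (Real.continuous_exp.comp (by continuity)).aestronglyMeasurable
  · rw [Real.norm_eq_abs, Real.abs_exp]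
    exact Real.exp_le_exp.2 (exponent_bound hc μ t)

private lemma exponent_bound' {c : ℝ} (hc : 0 < c) (μ t : ℝ) :
    μ * t - c * Real.cosh t ≤ μ ^ 2 / (2 * c) + -(c / 2) * (t - μ / c) ^ 2 := by
  have key : μ ^ 2 / (2 * c) + -(c / 2) * (t - μ / c) ^ 2 = μ * t - c / 2 * t ^ 2 := by
    field_simp
    ring
  rw [key]; exact exponent_bound hc μ t

private lemma tendsto_g_atTop {c : ℝ} (hc : 0 < c) (μ : ℝ) :
    Tendsto (fun t : ℝ => exp (μ * t - c * Real.cosh t)) atTop (𝓝 0) := by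
  apply Real.tendsto_exp_atBot.comp
  apply tendsto_atBot_mono (fun t => exponent_bound' hc μ t)
  apply tendsto_atBot_add_const_left
  apply Tendsto.const_mul_atTop_of_neg (by linarith : -(c/2) < 0)
  exact (tendsto_pow_atTop two_ne_zero).comp (tendsto_atTop_add_const_right _ _ tendsto_id)

private lemma tendsto_g_atBot {c : ℝ} (hc : 0 < c) (μ : ℝ) :
    Tendsto (fun t : ℝ => exp (μ * t - c * Real.cosh t)) atBot (𝓝 0) := by
  apply Real.tendsto_exp_atBot.comp
  apply tendsto_atBot_mono (fun t => exponent_bound' hc μ t)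
  apply tendsto_atBot_add_const_left
  apply Tendsto.const_mul_atTop_of_neg (by linarith : -(c/2) < 0)
  have h1 : Tendsto (fun t : ℝ => |t - μ / c|) atBot atTop :=
    tendsto_abs_atBot_atTop.comp (tendsto_atBot_add_const_right _ _ tendsto_id)
  have h2 := (tendsto_pow_atTop (two_ne_zero)).comp h1
  refine h2.congr fun t => ?_
  simp [sq_abs]

private lemma sinh_mul_g {c : ℝ} (μ t : ℝ) :
    Real.sinh t * exp (μ * t - c * Real.cosh t)
      = (exp ((μ + 1) * t - c * Real.cosh t) - exp ((μ - 1) * t - c * Real.cosh t)) / 2 := by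
  rw [Real.sinh_eq, show (μ + 1) * t - c * Real.cosh t = t + (μ * t - c * Real.cosh t) by ring,
    show (μ - 1) * t - c * Real.cosh t = -t + (μ * t - c * Real.cosh t) by ring,
    Real.exp_add, Real.exp_add]
  ring

private lemma integral_deriv_g_zero {c : ℝ} (hc : 0 < c) (μ : ℝ) :
    ∫ t : ℝ, (μ - c * Real.sinh t) * exp (μ * t - c * Real.cosh t) = 0 := by
  set F : ℝ → ℝ := fun t => exp (μ * t - c * Real.cosh t) with hF
  have hderiv : ∀ t : ℝ, HasDerivAt F ((μ - c * Real.sinh t) * F t) t := by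
    intro t
    have h1 : HasDerivAt (fun t : ℝ => μ * t - c * Real.cosh t) (μ - c * Real.sinh t) t := by
      have := ((hasDerivAt_id t).const_mul μ).sub ((Real.hasDerivAt_cosh t).const_mul c)
      simp only [mul_one] at this
      exact this
    simpa [mul_comm] using h1.exp
  have hint : Integrable (fun t => (μ - c * Real.sinh t) * F t) := by
    have heq : (fun t => (μ - c * Real.sinh t) * F t)
        = fun t => μ * F t - c * ((exp ((μ + 1) * t - c * Real.cosh t)
            - exp ((μ - 1) * t - c * Real.cosh t)) / 2) := by
      funext t
      rw [← sinh_mul_g]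
      ring
    rw [heq]
    exact ((integrable_g hc μ).const_mul μ).sub
      ((((integrable_g hc (μ + 1)).sub (integrable_g hc (μ - 1))).div_const 2).const_mul c)
  have h1 : ∫ t in Iic (0:ℝ), (μ - c * Real.sinh t) * F t = F 0 - 0 :=
    integral_Iic_of_hasDerivAt_of_tendsto
      ((hderiv 0).continuousAt.continuousWithinAt)
      (fun x _ => hderiv x) hint.integrableOn (tendsto_g_atBot hc μ)
  have h2 : ∫ t in Ioi (0:ℝ), (μ - c * Real.sinh t) * F t = 0 - F 0 :=
    integral_Ioi_of_hasDerivAt_of_tendsto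
      ((hderiv 0).continuousAt.continuousWithinAt)
      (fun x _ => hderiv x) hint.integrableOn (tendsto_g_atTop hc μ)
  rw [← intervalIntegral.integral_Iic_add_Ioi hint.integrableOn hint.integrableOn, h1, h2]
  ring

private lemma recurrence {c : ℝ} (hc : 0 < c) (μ : ℝ) :
    (∫ t : ℝ, exp ((μ + 1) * t - c * Real.cosh t))
      - (∫ t : ℝ, exp ((μ - 1) * t - c * Real.cosh t))
      = 2 * μ / c * ∫ t : ℝ, exp (μ * t - c * Real.cosh t) := by
  have h0 := integral_deriv_g_zero hc μ
  have heq : (fun t : ℝ => (μ - c * Real.sinh t) * exp (μ * t - c * Real.cosh t))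
      = fun t => μ * exp (μ * t - c * Real.cosh t) - c * ((exp ((μ + 1) * t - c * Real.cosh t)
          - exp ((μ - 1) * t - c * Real.cosh t)) / 2) := by
    funext t
    rw [← sinh_mul_g]
    ring
  have hA : Integrable (fun t : ℝ => μ * exp (μ * t - c * Real.cosh t)) :=
    (integrable_g hc μ).const_mul μ
  have hB : Integrable (fun t : ℝ => c * ((exp ((μ + 1) * t - c * Real.cosh t)
      - exp ((μ - 1) * t - c * Real.cosh t)) / 2)) := by
    exact ((((integrable_g hc (μ + 1)).sub (integrable_g hc (μ - 1))).div_const 2).const_mul c)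
  rw [heq, integral_sub hA hB, integral_const_mul, integral_const_mul, integral_div,
    integral_sub (integrable_g hc (μ + 1)) (integrable_g hc (μ - 1))] at h0
  field_simp at h0 ⊢
  linarith

private lemma g_add_g {c : ℝ} (μ t : ℝ) :
    exp (μ * t - c * Real.cosh t) + exp (-μ * t - c * Real.cosh t)
      = 2 * (exp (-c * Real.cosh t) * Real.cosh (μ * t)) := by
  rw [show μ * t - c * Real.cosh t = μ * t + -c * Real.cosh t by ring,
    show -μ * t - c * Real.cosh t = -(μ * t) + -c * Real.cosh t by ring,
    Real.exp_add, Real.exp_add, Real.cosh_eq (μ * t)]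
  ring

private lemma integral_g_eq_two_besselK {c : ℝ} (hc : 0 < c) (μ : ℝ) :
    ∫ t : ℝ, exp (μ * t - c * Real.cosh t) = 2 * besselK μ c := by
  have hint := integrable_g hc μ
  rw [← intervalIntegral.integral_Iic_add_Ioi hint.integrableOn hint.integrableOn]
  have h1 : ∫ t in Iic (0:ℝ), exp (μ * t - c * Real.cosh t)
      = ∫ t in Ioi (0:ℝ), exp (-μ * t - c * Real.cosh t) := by
    rw [show Iic (0:ℝ) = Iic (-0) by norm_num, ← integral_comp_neg_Ioi]
    congr 1
    funext t
    rw [Real.cosh_neg]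
    ring_nf
  rw [h1, ← integral_add (integrable_g hc (-μ)).integrableOn (integrable_g hc μ).integrableOn]
  rw [besselK, ← integral_const_mul]
  congr 1
  funext t
  rw [← g_add_g]
  ring

private lemma besselK_pos {c : ℝ} (hc : 0 < c) (μ : ℝ) : 0 < besselK μ c := by
  have hint : IntegrableOn (fun t => exp (-c * Real.cosh t) * Real.cosh (μ * t)) (Ioi (0:ℝ)) := by
    have h : Integrable (fun t : ℝ =>
        (exp (μ * t - c * Real.cosh t) + exp (-μ * t - c * Real.cosh t)) / 2) :=
      ((integrable_g hc μ).add (integrable_g hc (-μ))).div_const 2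
    refine (h.congr (Eventually.of_forall fun t => ?_)).integrableOn
    show (exp (μ * t - c * Real.cosh t) + exp (-μ * t - c * Real.cosh t)) / 2 = _
    rw [g_add_g]
    ring
  rw [besselK]
  refine (setIntegral_pos_iff_support_of_nonneg_ae ?_ hint).2 ?_
  · filter_upwards with t
    positivity
  · have hsup : Function.support (fun t => exp (-c * Real.cosh t) * Real.cosh (μ * t)) = univ := by
      ext t
      simp only [Function.mem_support, mem_univ, iff_true]
      positivity
    rw [hsup, univ_inter]
    simp [Real.volume_Ioi]

private lemma cov {a b : ℝ} (ha : 0 < a) (hb : 0 < b) (μ : ℝ) :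
    ∫ x in Ioi (0:ℝ), x ^ (μ - 1) * exp (-(a * x + b / x) / 2)
      = Real.sqrt (b / a) ^ μ * ∫ t : ℝ, exp (μ * t - Real.sqrt (a * b) * Real.cosh t) := by
  set r := Real.sqrt (b / a) with hr
  set c := Real.sqrt (a * b) with hc
  have hrpos : 0 < r := Real.sqrt_pos.2 (by positivity)
  have har : a * r = c := by
    rw [hr, hc, show a = Real.sqrt (a ^ 2) by rw [Real.sqrt_sq ha.le],
      ← Real.sqrt_mul (by positivity) _]
    congr 1
    field_simp
    rw [Real.sq_sqrt (by positivity)]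
  have hbr : b / r = c := by
    have h : c * r = b := by
      rw [hc, hr, ← Real.sqrt_mul (by positivity : (0:ℝ) ≤ a * b),
        show a * b * (b / a) = b ^ 2 by field_simp, Real.sqrt_sq hb.le]
    rw [div_eq_iff hrpos.ne']
    exact h.symm
  have himg : (fun t : ℝ => r * exp t) '' univ = Ioi (0:ℝ) := by
    rw [image_univ]
    ext y
    simp only [mem_range, mem_Ioi]
    constructor
    · rintro ⟨t, rfl⟩; positivity
    · intro hy
      exact ⟨Real.log (y / r), by
        rw [Real.exp_log (by positivity)]
        field_simp⟩
  have key := integral_image_eq_integral_abs_deriv_smul MeasurableSet.univ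
    (f' := fun t => r * exp t)
    (fun t _ => ((Real.hasDerivAt_exp t).const_mul r).hasDerivWithinAt)
    (fun s _ t _ hst => by
      have := mul_left_cancel₀ hrpos.ne' hst
      exact Real.exp_injective this)
    (fun x => x ^ (μ - 1) * exp (-(a * x + b / x) / 2))
  rw [himg] at key
  rw [key, ← integral_const_mul]
  rw [Measure.restrict_univ]
  congr 1
  funext t
  have hre : 0 < r * exp t := by positivity
  rw [smul_eq_mul, abs_of_pos hre]
  have h1 : (r * exp t) ^ (μ - 1) = (r * exp t) ^ μ / (r * exp t) :=
    Real.rpow_sub_one hre.ne' μ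
  have h2 : (r * exp t) ^ μ = r ^ μ * exp (μ * t) := by
    rw [Real.mul_rpow hrpos.le (Real.exp_pos t).le, ← Real.exp_mul, mul_comm t μ]
  have h3 : -(a * (r * exp t) + b / (r * exp t)) / 2 = -(c * Real.cosh t) := by
    rw [Real.cosh_eq]
    rw [show a * (r * exp t) = (a * r) * exp t by ring, har]
    rw [show b / (r * exp t) = (b / r) * (exp t)⁻¹ by field_simp, hbr, ← Real.exp_neg]
    ring
  rw [h1, h2, h3]
  rw [show μ * t - c * Real.cosh t = μ * t + -(c * Real.cosh t) by ring, Real.exp_add]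
  field_simp

/-- The inverse moment of a Generalized Inverse Gaussian random variable `W ~ GIG(ν, a, b)`
equals `√(a/b) K_{ν+1}(√(ab)) / K_ν(√(ab)) - 2ν/b`, expressed as a ratio of integrals. -/
theorem gig_inverse_moment (a b ν : ℝ) (ha : 0 < a) (hb : 0 < b) :
    (∫ x in Set.Ioi (0 : ℝ), x ^ (ν - 2) * exp (-(a * x + b / x) / 2)) /
      (∫ x in Set.Ioi (0 : ℝ), x ^ (ν - 1) * exp (-(a * x + b / x) / 2)) =
      Real.sqrt (a / b) * besselK (ν + 1) (Real.sqrt (a * b)) / besselK ν (Real.sqrt (a * b))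
        - 2 * ν / b := by
  set r := Real.sqrt (b / a) with hr
  set c := Real.sqrt (a * b) with hcdef
  have hcpos : 0 < c := Real.sqrt_pos.2 (by positivity)
  have hrpos : 0 < r := Real.sqrt_pos.2 (by positivity)
  have hcr : c * r = b := by
    rw [hcdef, hr, ← Real.sqrt_mul (by positivity : (0:ℝ) ≤ a * b),
      show a * b * (b / a) = b ^ 2 by field_simp, Real.sqrt_sq hb.le]
  have hs : Real.sqrt (a / b) = r⁻¹ := by
    rw [hr, show a / b = (b / a)⁻¹ by rw [inv_div], Real.sqrt_inv]
  have hnum := cov ha hb (ν - 1)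
  rw [show ν - 1 - 1 = ν - 2 by ring] at hnum
  have hden := cov ha hb ν
  have hKpos := besselK_pos hcpos ν
  have hK1 := integral_g_eq_two_besselK hcpos (ν + 1)
  have hK0 := integral_g_eq_two_besselK hcpos ν
  have hKm := recurrence hcpos ν
  rw [hK1, hK0] at hKm
  -- hKm : I(ν+1) - I(ν-1) = 2ν/c * I(ν), so I(ν-1) = 2 K(ν+1) - 2ν/c * 2 K(ν)
  have hIm : (∫ t : ℝ, exp ((ν - 1) * t - c * Real.cosh t))
      = 2 * besselK (ν + 1) c - 2 * ν / c * (2 * besselK ν c) := by linarith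
  rw [← hr, ← hcdef] at hnum hden
  rw [hnum, hden, hIm, integral_g_eq_two_besselK hcpos ν, hs,
    show (2:ℝ) * ν / b = 2 * ν / (c * r) by rw [hcr]]
  have hrp : (0:ℝ) < r ^ (ν - 1) := Real.rpow_pos_of_pos hrpos _
  have hrr : r ^ ν = r ^ (ν - 1) * r := by
    rw [Real.rpow_sub_one hrpos.ne', div_mul_cancel₀ _ hrpos.ne']
  rw [hrr, mul_assoc]
  rw [mul_div_mul_left _ _ hrp.ne']
  rw [div_eq_iff (by positivity : r * (2 * besselK ν c) ≠ 0)]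
  field_simp
end

section
/- Let p ≥ 1, let D be a p×p diagonal matrix with strictly positive diagonal entries, let Σ be a p×p symmetric positive definite matrix, and let ξ, μ ∈ ℝ^p and y ∈ ℝ^p with y ≠ μ. Set m = (y − μ)ᵀ(DΣD)^{−1}(y − μ), d = ξᵀΣ^{−1}ξ, and ν = (2 − p)/2. Then ∫₀^∞ (2πw)^{−p/2} (det(DΣD))^{−1/2} exp(−(1/(2w))(y − μ − wDξ)ᵀ(DΣD)^{−1}(y − μ − wDξ)) e^{−w} dw = (2 exp((y − μ)ᵀD^{−1}Σ^{−1}ξ) / ((2π)^{p/2} (det(DΣD))^{1/2})) · (m/(2 + d))^{ν/2} · K_ν(√((2 + d) m)), where K_ν(x) = ∫₀^∞ e^{−x cosh t} cosh(ν t) dt. -/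
open Real MeasureTheory Matrix

private lemma integrable_exp_nu_cosh (ν x : ℝ) (hx : 0 < x) :
    Integrable (fun t : ℝ => exp (ν * t - x * cosh t)) := by
  have hmeas : AEStronglyMeasurable (fun t : ℝ => exp (ν * t - x * cosh t)) volume :=
    (Real.continuous_exp.comp (by continuity)).aestronglyMeasurable
  have hgint : Integrable (fun t : ℝ => exp (2 * (|ν| + 1)^2 / x) * exp (-|t|)) := by
    apply Integrable.const_mul
    have h1 : IntegrableOn (fun t : ℝ => exp (-|t|)) (Set.Iic 0) := by
      apply (integrableOn_exp_Iic 0).congr_fun ?_ measurableSet_Iic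
      intro t ht
      simp only [Set.mem_Iic] at ht
      show Real.exp t = Real.exp (-|t|)
      rw [abs_of_nonpos ht, neg_neg]
    have h2 : IntegrableOn (fun t : ℝ => exp (-|t|)) (Set.Ioi 0) := by
      apply (exp_neg_integrableOn_Ioi 0 one_pos).congr_fun ?_ measurableSet_Ioi
      intro t ht
      simp only [Set.mem_Ioi] at ht
      show Real.exp (-1 * t) = Real.exp (-|t|)
      rw [abs_of_pos ht, neg_one_mul]
    have := h1.union h2
    rwa [Set.Iic_union_Ioi, integrableOn_univ] at this
  refine hgint.mono' hmeas (Filter.Eventually.of_forall fun t => ?_)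
  rw [Real.norm_eq_abs, Real.abs_exp, ← Real.exp_add]
  apply Real.exp_le_exp.2
  have h1 : Real.exp |t| ≤ 2 * Real.cosh t := by
    rw [Real.cosh_eq]
    rcases abs_cases t with ⟨h, _⟩ | ⟨h, _⟩ <;> rw [h] <;>
      nlinarith [Real.exp_pos (-t), Real.exp_pos t]
  have h2 : (1 + |t| / 2) ^ 2 ≤ Real.exp |t| := by
    have h3 := Real.add_one_le_exp (|t| / 2)
    have h4 : (0:ℝ) ≤ 1 + |t| / 2 := by positivity
    calc (1 + |t| / 2) ^ 2 ≤ (Real.exp (|t| / 2)) ^ 2 := by nlinarith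
      _ = Real.exp |t| := by rw [sq, ← Real.exp_add]; ring_nf
  have h5 : ν * t ≤ |ν| * |t| := le_trans (le_abs_self _) (by rw [abs_mul])
  have h6 : 0 ≤ |t| := abs_nonneg t
  have h7 : 0 ≤ |ν| := abs_nonneg ν
  have h8 : x * (|t| ^ 2 / 8) ≤ x * cosh t := by
    apply mul_le_mul_of_nonneg_left _ hx.le
    nlinarith
  have h9 : 2 * (|ν| + 1) ^ 2 / x * x = 2 * (|ν| + 1) ^ 2 := by field_simp
  nlinarith [sq_nonneg (x * |t| - 4 * (|ν| + 1)), mul_pos hx hx,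
    mul_le_mul_of_nonneg_left h5 hx.le]

private lemma integral_exp_nu_cosh (ν x : ℝ) (hx : 0 < x) :
    (∫ t : ℝ, exp (ν * t - x * cosh t)) = 2 * besselK ν x := by
  have hint := integrable_exp_nu_cosh ν x hx
  have hintneg : Integrable (fun t : ℝ => exp (ν * (-t) - x * cosh (-t))) :=
    hint.comp_neg
  rw [← intervalIntegral.integral_Iic_add_Ioi (b := (0:ℝ)) hint.integrableOn hint.integrableOn]
  have h1 : (∫ t in Set.Iic (0:ℝ), exp (ν * t - x * cosh t))
      = ∫ t in Set.Ioi (0:ℝ), exp (ν * (-t) - x * cosh (-t)) := by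
    have := integral_comp_neg_Ioi (0:ℝ) (fun t => Real.exp (ν * t - x * cosh t))
    rw [neg_zero] at this
    rw [← this]
  rw [h1, ← integral_add hintneg.integrableOn hint.integrableOn]
  have h2 : ∀ t : ℝ, exp (ν * (-t) - x * cosh (-t)) + exp (ν * t - x * cosh t)
      = 2 * (exp (-x * cosh t) * cosh (ν * t)) := by
    intro t
    rw [Real.cosh_neg, Real.cosh_eq (ν * t)]
    rw [show ν * (-t) - x * cosh t = (-(x * cosh t)) + (-(ν*t)) by ring,
      show ν * t - x * cosh t = (-(x * cosh t)) + ν*t by ring,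
      Real.exp_add, Real.exp_add]
    ring_nf
  simp_rw [h2]
  rw [MeasureTheory.integral_const_mul, besselK]

private lemma integral_rpow_exp_eq_besselK (ν a b : ℝ) (ha : 0 < a) (hb : 0 < b) :
    (∫ w in Set.Ioi (0:ℝ), w ^ (ν - 1) * exp (-(a / w) - b * w))
      = 2 * (a / b) ^ (ν / 2) * besselK ν (2 * Real.sqrt (a * b)) := by
  set c := Real.sqrt (a / b) with hcdef
  have hc : 0 < c := Real.sqrt_pos.2 (by positivity)
  have hsab : 0 < Real.sqrt (a * b) := Real.sqrt_pos.2 (by positivity)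
  have hkey : c * Real.sqrt (a * b) = a := by
    rw [hcdef, ← Real.sqrt_mul (by positivity)]
    rw [show a / b * (a * b) = a ^ 2 by field_simp]
    exact Real.sqrt_sq ha.le
  have hac : a / c = Real.sqrt (a * b) := by
    rw [div_eq_iff hc.ne']; linear_combination -hkey
  have hbc : b * c = Real.sqrt (a * b) := by
    rw [hcdef, ← Real.sqrt_sq hb.le, ← Real.sqrt_mul (sq_nonneg b)]
    congr 1
    field_simp
    ring
    rw [Real.sq_sqrt (sq_nonneg b)]
  have himg : (fun t : ℝ => c * Real.exp t) '' Set.univ = Set.Ioi 0 := by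
    ext w
    simp only [Set.image_univ, Set.mem_range, Set.mem_Ioi]
    constructor
    · rintro ⟨t, rfl⟩; positivity
    · intro hw; exact ⟨Real.log (w / c), by rw [Real.exp_log (by positivity)]; field_simp⟩
  have hsub := integral_image_eq_integral_abs_deriv_smul (s := Set.univ)
    MeasurableSet.univ
    (f := fun t => c * Real.exp t) (f' := fun t => c * Real.exp t)
    (fun t _ => ((Real.hasDerivAt_exp t).const_mul c).hasDerivWithinAt)
    (fun t₁ _ t₂ _ h => Real.exp_injective (mul_left_cancel₀ hc.ne' h))
    (fun w => w ^ (ν - 1) * exp (-(a / w) - b * w))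
  rw [himg] at hsub
  rw [hsub, Measure.restrict_univ]
  have hpt : ∀ t : ℝ, |c * Real.exp t| • ((c * Real.exp t) ^ (ν - 1) *
      exp (-(a / (c * Real.exp t)) - b * (c * Real.exp t)))
      = c ^ ν * exp (ν * t - (2 * Real.sqrt (a * b)) * cosh t) := by
    intro t
    have he : (0:ℝ) < Real.exp t := Real.exp_pos t
    rw [smul_eq_mul, abs_of_pos (by positivity)]
    rw [Real.mul_rpow hc.le he.le]
    rw [show Real.exp t ^ (ν - 1) = Real.exp (t * (ν - 1)) from (Real.exp_mul t (ν-1)).symm]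
    have hexp1 : -(a / (c * Real.exp t)) - b * (c * Real.exp t)
        = -(2 * Real.sqrt (a * b)) * cosh t := by
      rw [Real.cosh_eq]
      have : a / (c * Real.exp t) = Real.sqrt (a * b) * Real.exp (-t) := by
        rw [Real.exp_neg, ← hac]; field_simp
      rw [this, show b * (c * Real.exp t) = Real.sqrt (a * b) * Real.exp t by
        rw [← hbc]; ring]
      ring
    rw [hexp1]
    rw [show c ^ ν = c * c ^ (ν - 1) by
        rw [show ν = 1 + (ν - 1) by ring]
        rw [Real.rpow_add hc, Real.rpow_one]; ring_nf,
      show ν * t - 2 * Real.sqrt (a*b) * cosh t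
        = t + (t * (ν - 1) + -(2 * Real.sqrt (a * b)) * cosh t) by ring,
      Real.exp_add, Real.exp_add]
    ring
  simp_rw [hpt]
  rw [MeasureTheory.integral_const_mul, integral_exp_nu_cosh ν _ (by positivity)]
  have hcpow : c ^ ν = (a / b) ^ (ν / 2) := by
    rw [hcdef, Real.sqrt_eq_rpow, ← Real.rpow_mul (by positivity : (0:ℝ) ≤ a / b)]
    rw [show 1 / 2 * ν = ν / 2 by ring]
  rw [hcpow]; ring

/-- The density of the Gaussian location-scale mixture
`Y = μ + DξW + √W (DΣD)^{1/2}Z`, `W ~ Exp(1)`, obtained by integrating the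
`N_p(μ + Dξw, wDΣD)` density against the standard exponential density, equals the
Multivariate Asymmetric Laplace density `MAL_p(μ, Dξ, DΣD)` of Kotz et al. -/
theorem mal_density_mixture_integral (p : ℕ) (hp : 1 ≤ p)
    (δ : Fin p → ℝ) (hδ : ∀ j, 0 < δ j)
    (D : Matrix (Fin p) (Fin p) ℝ) (hD : D = diagonal δ)
    (A : Matrix (Fin p) (Fin p) ℝ) (hA : A.PosDef)
    (ξ μ y : Fin p → ℝ) (hy : y ≠ μ)
    (m d ν : ℝ)
    (hm : m = (y - μ) ⬝ᵥ ((D * A * D)⁻¹ *ᵥ (y - μ)))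
    (hd : d = ξ ⬝ᵥ (A⁻¹ *ᵥ ξ))
    (hν : ν = (2 - (p : ℝ)) / 2) :
    (∫ w in Set.Ioi (0 : ℝ),
        (2 * π * w) ^ (-(p : ℝ) / 2) * (D * A * D).det ^ (-(1 : ℝ) / 2) *
          exp (-(1 / (2 * w)) *
            ((y - μ - w • (D *ᵥ ξ)) ⬝ᵥ ((D * A * D)⁻¹ *ᵥ (y - μ - w • (D *ᵥ ξ))))) *
          exp (-w)) =
      (2 * exp ((y - μ) ⬝ᵥ ((D⁻¹ * A⁻¹) *ᵥ ξ)) /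
          ((2 * π) ^ ((p : ℝ) / 2) * (D * A * D).det ^ ((1 : ℝ) / 2))) *
        (m / (2 + d)) ^ (ν / 2) * besselK ν (Real.sqrt ((2 + d) * m)) := by
  -- matrix facts
  have hDt : Dᵀ = D := by rw [hD, diagonal_transpose]
  have hDdetpos : 0 < D.det := by
    rw [hD, det_diagonal]; exact Finset.prod_pos fun j _ => hδ j
  have hDdet : D.det ≠ 0 := hDdetpos.ne'
  have hAt : Aᵀ = A := by
    rw [← conjTranspose_eq_transpose_of_trivial]; exact hA.1
  have hDinv : D⁻¹ * D = 1 := nonsing_inv_mul D (isUnit_iff_ne_zero.mpr hDdet)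
  have hDinv' : D * D⁻¹ = 1 := mul_nonsing_inv D (isUnit_iff_ne_zero.mpr hDdet)
  set v : Fin p → ℝ := y - μ with hv
  set u : Fin p → ℝ := D *ᵥ ξ with hu
  set S : Matrix (Fin p) (Fin p) ℝ := D * A * D with hS
  set M : Matrix (Fin p) (Fin p) ℝ := S⁻¹ with hM
  have hSinv : M = D⁻¹ * (A⁻¹ * D⁻¹) := by
    rw [hM, hS, Matrix.mul_inv_rev, Matrix.mul_inv_rev]
  have hSt : Sᵀ = S := by
    rw [hS, transpose_mul, transpose_mul, hDt, hAt, mul_assoc]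
  have hMt : Mᵀ = M := by rw [hM, transpose_nonsing_inv, hSt]
  have hsym : ∀ z w : Fin p → ℝ, z ⬝ᵥ (M *ᵥ w) = w ⬝ᵥ (M *ᵥ z) := by
    intro z w
    rw [dotProduct_mulVec, ← mulVec_transpose, hMt, dotProduct_comm]
  have hMu : M *ᵥ u = (D⁻¹ * A⁻¹) *ᵥ ξ := by
    rw [hSinv, hu, mulVec_mulVec]
    congr 1
    simp only [mul_assoc, hDinv, mul_one]
  set c' : ℝ := v ⬝ᵥ ((D⁻¹ * A⁻¹) *ᵥ ξ) with hc'
  have hd' : u ⬝ᵥ (M *ᵥ u) = d := by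
    rw [hMu, hu, dotProduct_comm, dotProduct_mulVec, ← mulVec_transpose, hDt,
      mulVec_mulVec, ← mul_assoc, hDinv', one_mul, dotProduct_comm, hd,
      dotProduct_mulVec]
  have hvMu : v ⬝ᵥ (M *ᵥ u) = c' := by rw [hMu]
  have hvMv : v ⬝ᵥ (M *ᵥ v) = m := by rw [hm]
  -- positivity
  have hvne : v ≠ 0 := sub_ne_zero.mpr hy
  have hmpos : 0 < m := by
    have hw0 : D⁻¹ *ᵥ v ≠ 0 := by
      intro h
      apply hvne
      have : D *ᵥ (D⁻¹ *ᵥ v) = D *ᵥ 0 := by rw [h]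
      rwa [mulVec_mulVec, hDinv', one_mulVec, mulVec_zero] at this
    have hpos := (hA.inv.dotProduct_mulVec_pos hw0)
    rw [hm]
    have : (y - μ) ⬝ᵥ ((D * A * D)⁻¹ *ᵥ (y - μ)) = (D⁻¹ *ᵥ v) ⬝ᵥ (A⁻¹ *ᵥ (D⁻¹ *ᵥ v)) := by
      show v ⬝ᵥ (M *ᵥ v) = _
      rw [hSinv, ← mulVec_mulVec, ← mulVec_mulVec, dotProduct_mulVec (v) (D⁻¹),
        ← mulVec_transpose, transpose_nonsing_inv, hDt]
    rw [this]
    simpa [star_trivial] using hpos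
  have hdnn : 0 ≤ d := by
    rw [hd]
    simpa [star_trivial] using hA.inv.posSemidef.dotProduct_mulVec_nonneg ξ
  have hdetS : 0 < S.det := by
    rw [hS, det_mul, det_mul]
    have := hA.det_pos
    positivity
  -- quadratic expansion
  have hquad : ∀ w : ℝ, (v - w • u) ⬝ᵥ (M *ᵥ (v - w • u)) = m - 2*w*c' + w^2*d := by
    intro w
    rw [mulVec_sub, mulVec_smul, sub_dotProduct, dotProduct_sub, dotProduct_sub,
      smul_dotProduct, smul_dotProduct, dotProduct_smul, dotProduct_smul,
      hsym u v, hvMu, hvMv, hd']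
    simp only [smul_eq_mul]
    ring
  -- pointwise rewriting of the integrand
  set a : ℝ := m / 2 with ha
  set b : ℝ := (2 + d) / 2 with hb
  have hapos : 0 < a := by rw [ha]; positivity
  have hbpos : 0 < b := by rw [hb]; positivity
  have hpt : ∀ w ∈ Set.Ioi (0:ℝ),
      (2 * π * w) ^ (-(p : ℝ) / 2) * S.det ^ (-(1 : ℝ) / 2) *
          exp (-(1 / (2 * w)) * ((v - w • u) ⬝ᵥ (M *ᵥ (v - w • u)))) * exp (-w)
        = ((2 * π) ^ (-(p : ℝ) / 2) * S.det ^ (-(1 : ℝ) / 2) * exp c') *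
          (w ^ (ν - 1) * exp (-(a / w) - b * w)) := by
    intro w hw
    rw [Set.mem_Ioi] at hw
    have e1 : exp (-(1 / (2 * w)) * (m - 2*w*c' + w^2*d))
        = exp c' * exp (-(a/w) - b*w) * exp w := by
      rw [← Real.exp_add, ← Real.exp_add]
      congr 1
      rw [ha, hb]; field_simp; ring
    have e2 : Real.exp w * Real.exp (-w) = 1 := by rw [← Real.exp_add]; simp
    rw [hquad w, e1, Real.mul_rpow (by positivity) hw.le,
      show ν - 1 = -(p:ℝ)/2 by rw [hν]; ring]
    linear_combination ((2 * π) ^ (-(p:ℝ)/2) * w ^ (-(p:ℝ)/2) * S.det ^ (-(1:ℝ)/2) *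
      exp c' * exp (-(a/w) - b*w)) * e2
  rw [setIntegral_congr_fun measurableSet_Ioi hpt]
  rw [MeasureTheory.integral_const_mul]
  rw [integral_rpow_exp_eq_besselK ν a b hapos hbpos]
  -- match constants
  have h2d : (0:ℝ) < 2 + d := by positivity
  have hab : a / b = m / (2 + d) := by
    rw [ha, hb]
    rw [div_div_div_cancel_right₀]
    norm_num
  have hsq : 2 * Real.sqrt (a * b) = Real.sqrt ((2 + d) * m) := by
    rw [show ((2 + d) * m : ℝ) = 2^2 * (a * b) by rw [ha, hb]; ring,
      Real.sqrt_mul (by positivity : (0:ℝ) ≤ 2^2),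
      Real.sqrt_sq (by norm_num : (0:ℝ) ≤ 2)]
  rw [hab, hsq]
  have hn1 : (2*π) ^ (-(p:ℝ)/2) = ((2*π) ^ ((p:ℝ)/2))⁻¹ := by
    rw [show -(p:ℝ)/2 = -((p:ℝ)/2) by ring, Real.rpow_neg (by positivity)]
  have hn2 : S.det ^ (-(1:ℝ)/2) = (S.det ^ ((1:ℝ)/2))⁻¹ := by
    rw [show -(1:ℝ)/2 = -((1:ℝ)/2) by ring, Real.rpow_neg hdetS.le]
  rw [hn1, hn2]
  have hp1 : ((2*π) ^ ((p:ℝ)/2)) ≠ 0 := by positivity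
  have hp2 : (S.det ^ ((1:ℝ)/2)) ≠ 0 := by positivity
  field_simp
end

section
/- Let p, k, n ≥ 1, let z₁,…,z_n > 0 be positive weights, X₁,…,X_n ∈ ℝ^k, Y₁,…,Y_n ∈ ℝ^p, ξ ∈ ℝ^p, let D be a p×p diagonal matrix with strictly positive diagonal entries and Σ a p×p symmetric positive definite matrix, and suppose M = Σ_{i=1}^n z_i X_i X_iᵀ is invertible. For β ∈ ℝ^{p×k}, define Q(β) = Σ_{i=1}^n (Y_i − βX_i)ᵀ D^{−1}Σ^{−1} ξ − (1/2) Σ_{i=1}^n z_i (Y_i − βX_i)ᵀ (DΣD)^{−1} (Y_i − βX_i). Then the matrix β̂ ∈ ℝ^{p×k} defined by β̂ᵀ = M^{−1}(Σ_{i=1}^n z_i X_i Y_iᵀ − Σ_{i=1}^n X_i ξᵀ D) is the unique maximizer of Q: for every β ∈ ℝ^{p×k} with β ≠ β̂, Q(β) < Q(β̂). -/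
open Matrix

set_option linter.unusedSectionVars false in
private lemma myVecMulVec_mul {m n o : Type*} [Fintype m] [Fintype n] [Fintype o]
    (x : m → ℝ) (w : n → ℝ) (S : Matrix n o ℝ) :
    vecMulVec x w * S = vecMulVec x (w ᵥ* S) := by
  ext i j
  simp [vecMulVec_apply, mul_apply, vecMul, dotProduct, Finset.mul_sum, mul_assoc]

set_option linter.unusedSectionVars false in
private lemma myMul_vecMulVec {l m n : Type*} [Fintype l] [Fintype m] [Fintype n]
    (B : Matrix l m ℝ) (x : m → ℝ) (y : n → ℝ) :
    B * vecMulVec x y = vecMulVec (B *ᵥ x) y := by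
  ext i j
  simp [vecMulVec_apply, mul_apply, mulVec, dotProduct, Finset.sum_mul, mul_assoc]

private lemma myVecMulVec_mulVec {m n o : Type*} [Fintype m] [Fintype n] [Fintype o]
    (x : m → ℝ) (B : Matrix o n ℝ) (y : n → ℝ) :
    vecMulVec x (B *ᵥ y) = vecMulVec x y * Bᵀ := by
  ext i j
  simp only [vecMulVec_apply, mul_apply, mulVec, dotProduct, Finset.mul_sum, transpose_apply]
  exact Finset.sum_congr rfl fun t _ => by ring

private lemma myVecMulVec_sub {m n : Type*} (x : m → ℝ) (a b : n → ℝ) :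
    vecMulVec x (a - b) = vecMulVec x a - vecMulVec x b := by
  ext i j; simp [vecMulVec_apply, mul_sub]

private lemma myDot_eq_trace {m n : Type*} [Fintype m] [Fintype n]
    (Δ : Matrix m n ℝ) (x : n → ℝ) (w : m → ℝ) :
    (Δ *ᵥ x) ⬝ᵥ w = trace (Δ * vecMulVec x w) := by
  simp [trace, diag, mul_apply, vecMulVec_apply, mulVec, dotProduct, Finset.sum_mul, mul_assoc]

/-- Closed-form M-step update for the regression coefficient matrix (Proposition 4): the
matrix `β̂` with `β̂ᵀ = M⁻¹(∑ᵢ zᵢ Xᵢ Yᵢᵀ - ∑ᵢ Xᵢ ξᵀ D)`, where `M = ∑ᵢ zᵢ Xᵢ Xᵢᵀ`, is the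
unique maximizer of the part `Q` of the expected complete log-likelihood that depends on
the regression coefficients. -/
theorem em_mstep_beta_unique_maximizer (p k n : ℕ) (hp : 1 ≤ p) (hk : 1 ≤ k) (hn : 1 ≤ n)
    (z : Fin n → ℝ) (hz : ∀ i, 0 < z i)
    (X : Fin n → Fin k → ℝ) (Y : Fin n → Fin p → ℝ) (ξ : Fin p → ℝ)
    (δ : Fin p → ℝ) (hδ : ∀ j, 0 < δ j)
    (D : Matrix (Fin p) (Fin p) ℝ) (hD : D = diagonal δ)
    (A : Matrix (Fin p) (Fin p) ℝ) (hA : A.PosDef)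
    (M : Matrix (Fin k) (Fin k) ℝ)
    (hM : M = ∑ i, z i • vecMulVec (X i) (X i)) (hMinv : IsUnit M.det)
    (Q : Matrix (Fin p) (Fin k) ℝ → ℝ)
    (hQ : Q = fun β =>
      (∑ i, (Y i - β *ᵥ X i) ⬝ᵥ ((D⁻¹ * A⁻¹) *ᵥ ξ)) -
        (1 / 2) * ∑ i, z i * ((Y i - β *ᵥ X i) ⬝ᵥ ((D * A * D)⁻¹ *ᵥ (Y i - β *ᵥ X i))))
    (βhat : Matrix (Fin p) (Fin k) ℝ)
    (hβhat : βhatᵀ =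
      M⁻¹ * (∑ i, z i • vecMulVec (X i) (Y i) - ∑ i, vecMulVec (X i) (ξ ᵥ* D))) :
    ∀ β : Matrix (Fin p) (Fin k) ℝ, β ≠ βhat → Q β < Q βhat := by
  intro β hβ
  -- Notation
  set S : Matrix (Fin p) (Fin p) ℝ := (D * A * D)⁻¹ with hS
  set v : Fin p → ℝ := (D⁻¹ * A⁻¹) *ᵥ ξ with hv
  set r : Fin n → Fin p → ℝ := fun i => Y i - βhat *ᵥ X i with hr
  set Δ : Matrix (Fin p) (Fin k) ℝ := βhat - β with hΔ
  set d : Fin n → Fin p → ℝ := fun i => Δ *ᵥ X i with hd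
  -- Basic invertibility and symmetry facts
  have hDsym : Dᵀ = D := by rw [hD, diagonal_transpose]
  have hDdet : IsUnit D.det := by
    rw [hD, det_diagonal]
    exact (Finset.prod_pos fun j _ => hδ j).ne'.isUnit
  have hAdet : IsUnit A.det := hA.det_pos.ne'.isUnit
  have hAsym : Aᵀ = A := hA.isHermitian
  have hAisym : (A⁻¹)ᵀ = A⁻¹ := by rw [transpose_nonsing_inv, hAsym]
  have hDisym : (D⁻¹)ᵀ = D⁻¹ := by rw [transpose_nonsing_inv, hDsym]
  -- S = D⁻¹ * A⁻¹ * D⁻¹ and S is symmetric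
  have hSval : S = D⁻¹ * (A⁻¹ * D⁻¹) := by
    rw [hS, Matrix.mul_inv_rev, Matrix.mul_inv_rev]
  have hSsym : Sᵀ = S := by
    rw [hSval, transpose_mul, transpose_mul, hAisym, hDisym, Matrix.mul_assoc]
  have hvecMulS : ∀ u : Fin p → ℝ, u ᵥ* S = S *ᵥ u := fun u => by
    rw [← mulVec_transpose, hSsym]
  have hvecMulD : ∀ u : Fin p → ℝ, u ᵥ* D = D *ᵥ u := fun u => by
    rw [← mulVec_transpose, hDsym]
  -- D * A * D is positive definite, hence so is S
  have hDAD : (D * A * D).PosDef := by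
    refine PosDef.of_dotProduct_mulVec_pos ?_ ?_
    · have h1 : Dᴴ = D := by
        rw [hD]; simp [diagonal_conjTranspose]
      have := isHermitian_conjTranspose_mul_mul D hA.1
      rwa [h1] at this
    · intro x hx
      have hDx : D *ᵥ x ≠ 0 := by
        intro h
        apply hx
        funext j
        have := congrFun h j
        rw [hD, mulVec_diagonal] at this
        have := mul_eq_zero.mp this
        rcases this with h1 | h1
        · exact absurd h1 (hδ j).ne'
        · exact h1
      have key := hA.dotProduct_mulVec_pos hDx
      rw [star_trivial] at key ⊢
      calc x ⬝ᵥ ((D * A * D) *ᵥ x)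
          = x ⬝ᵥ (D *ᵥ ((A * D) *ᵥ x)) := by rw [Matrix.mul_assoc, ← mulVec_mulVec]
        _ = (x ᵥ* D) ⬝ᵥ ((A * D) *ᵥ x) := by rw [dotProduct_mulVec]
        _ = (D *ᵥ x) ⬝ᵥ (A *ᵥ (D *ᵥ x)) := by rw [hvecMulD, ← mulVec_mulVec]
        _ > 0 := key
  have hSpd : S.PosDef := hDAD.inv
  -- The normal equations: ∑ zᵢ XᵢrᵢᵀS = ∑ Xᵢvᵀ
  have hcore : ∑ i, z i • vecMulVec (X i) (r i) = ∑ i, vecMulVec (X i) (ξ ᵥ* D) := by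
    have expand : ∀ i, vecMulVec (X i) (r i)
        = vecMulVec (X i) (Y i) - vecMulVec (X i) (X i) * βhatᵀ := by
      intro i
      rw [hr]
      simp only [myVecMulVec_sub, myVecMulVec_mulVec]
    have hMβ : M * βhatᵀ
        = (∑ i, z i • vecMulVec (X i) (Y i)) - ∑ i, vecMulVec (X i) (ξ ᵥ* D) := by
      rw [hβhat, Matrix.mul_nonsing_inv_cancel_left _ _ hMinv]
    have h3 : (∑ i, z i • (vecMulVec (X i) (X i) * βhatᵀ)) = M * βhatᵀ := by
      rw [hM, Matrix.sum_mul]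
      exact Finset.sum_congr rfl fun i _ => (Matrix.smul_mul _ _ _).symm
    calc ∑ i, z i • vecMulVec (X i) (r i)
        = ∑ i, (z i • vecMulVec (X i) (Y i) - z i • (vecMulVec (X i) (X i) * βhatᵀ)) := by
          refine Finset.sum_congr rfl fun i _ => ?_
          rw [expand i, smul_sub]
      _ = (∑ i, z i • vecMulVec (X i) (Y i)) - M * βhatᵀ := by
          rw [Finset.sum_sub_distrib, h3]
      _ = ∑ i, vecMulVec (X i) (ξ ᵥ* D) := by
          rw [hMβ]; exact sub_sub_cancel _ _
  -- The stationarity identity: the linear part vanishes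
  have hL : ∑ i, d i ⬝ᵥ v = ∑ i, z i * (d i ⬝ᵥ (S *ᵥ r i)) := by
    have hDS : ξ ᵥ* (D * S) = v := by
      have h1 : D * S = (D⁻¹ * A⁻¹)ᵀ := by
        rw [hSval, ← Matrix.mul_assoc, Matrix.mul_nonsing_inv D hDdet, Matrix.one_mul,
          transpose_mul, hAisym, hDisym]
      rw [h1, vecMul_transpose, hv]
    have hN : (∑ i, vecMulVec (X i) v : Matrix (Fin k) (Fin p) ℝ)
        = ∑ i, z i • vecMulVec (X i) (S *ᵥ r i) := by
      have h2 : ∀ i, vecMulVec (X i) (S *ᵥ r i) = vecMulVec (X i) (r i) * S := by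
        intro i
        rw [← hvecMulS, myVecMulVec_mul]
      calc (∑ i, vecMulVec (X i) v : Matrix (Fin k) (Fin p) ℝ)
          = ∑ i, vecMulVec (X i) (ξ ᵥ* D) * S := by
            refine Finset.sum_congr rfl fun i _ => ?_
            rw [myVecMulVec_mul, vecMul_vecMul, hDS]
        _ = (∑ i, vecMulVec (X i) (ξ ᵥ* D)) * S := by rw [Matrix.sum_mul]
        _ = (∑ i, z i • vecMulVec (X i) (r i)) * S := by rw [hcore]
        _ = ∑ i, z i • vecMulVec (X i) (S *ᵥ r i) := by
            rw [Matrix.sum_mul]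
            exact Finset.sum_congr rfl fun i _ => by rw [Matrix.smul_mul, h2]
    calc ∑ i, d i ⬝ᵥ v
        = ∑ i, trace (Δ * vecMulVec (X i) v) := by
          exact Finset.sum_congr rfl fun i _ => myDot_eq_trace _ _ _
      _ = trace (Δ * ∑ i, vecMulVec (X i) v) := by
          rw [Matrix.mul_sum, trace_sum]
      _ = trace (Δ * ∑ i, z i • vecMulVec (X i) (S *ᵥ r i)) := by rw [hN]
      _ = ∑ i, z i * (d i ⬝ᵥ (S *ᵥ r i)) := by
          rw [Matrix.mul_sum, trace_sum]
          refine Finset.sum_congr rfl fun i _ => ?_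
          rw [Matrix.mul_smul, trace_smul, myDot_eq_trace, smul_eq_mul]
  -- Some d i is nonzero
  have hΔne : Δ ≠ 0 := sub_ne_zero.mpr (Ne.symm hβ)
  have hdne : ∃ i, d i ≠ 0 := by
    by_contra h
    push_neg at h
    apply hΔne
    have hΔM : Δ * M = 0 := by
      rw [hM, Matrix.mul_sum]
      refine Finset.sum_eq_zero fun i _ => ?_
      rw [Matrix.mul_smul, myMul_vecMulVec]
      have h0 : Δ *ᵥ X i = 0 := h i
      rw [h0]
      have h1 : vecMulVec (0 : Fin p → ℝ) (X i) = 0 := by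
        ext a b; simp [vecMulVec_apply]
      rw [h1, smul_zero]
    calc Δ = Δ * (M * M⁻¹) := by rw [Matrix.mul_nonsing_inv _ hMinv, Matrix.mul_one]
      _ = (Δ * M) * M⁻¹ := by rw [Matrix.mul_assoc]
      _ = 0 := by rw [hΔM, Matrix.zero_mul]
  -- The quadratic part is strictly positive
  have hP : 0 < ∑ i, z i * (d i ⬝ᵥ (S *ᵥ d i)) := by
    obtain ⟨i₀, hi₀⟩ := hdne
    refine Finset.sum_pos' (fun i _ => ?_) ⟨i₀, Finset.mem_univ _, ?_⟩
    · have h1 : 0 ≤ d i ⬝ᵥ (S *ᵥ d i) := by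
        have := hSpd.posSemidef.dotProduct_mulVec_nonneg (d i)
        rwa [star_trivial] at this
      exact mul_nonneg (hz i).le h1
    · have h1 : 0 < d i₀ ⬝ᵥ (S *ᵥ d i₀) := by
        have := hSpd.dotProduct_mulVec_pos hi₀
        rwa [star_trivial] at this
      exact mul_pos (hz i₀) h1
  -- Expand Q β around βhat
  have hresid : ∀ i, Y i - β *ᵥ X i = r i + d i := by
    intro i
    show Y i - β *ᵥ X i = (Y i - βhat *ᵥ X i) + (βhat - β) *ᵥ X i
    rw [Matrix.sub_mulVec]
    abel
  have cross : ∀ a b : Fin p → ℝ, a ⬝ᵥ (S *ᵥ b) = b ⬝ᵥ (S *ᵥ a) := by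
    intro a b
    rw [dotProduct_mulVec, hvecMulS, dotProduct_comm]
  rw [hQ]
  simp only [hresid]
  have e1 : ∑ i, (r i + d i) ⬝ᵥ v = (∑ i, r i ⬝ᵥ v) + ∑ i, d i ⬝ᵥ v := by
    rw [← Finset.sum_add_distrib]
    exact Finset.sum_congr rfl fun i _ => add_dotProduct _ _ _
  have e2 : ∑ i, z i * ((r i + d i) ⬝ᵥ (S *ᵥ (r i + d i)))
      = (∑ i, z i * (r i ⬝ᵥ (S *ᵥ r i))) + 2 * (∑ i, z i * (d i ⬝ᵥ (S *ᵥ r i)))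
        + ∑ i, z i * (d i ⬝ᵥ (S *ᵥ d i)) := by
    have e2i : ∀ i, (r i + d i) ⬝ᵥ (S *ᵥ (r i + d i))
        = r i ⬝ᵥ (S *ᵥ r i) + 2 * (d i ⬝ᵥ (S *ᵥ r i)) + d i ⬝ᵥ (S *ᵥ d i) := by
      intro i
      rw [mulVec_add, dotProduct_add, add_dotProduct, add_dotProduct,
        cross (r i) (d i)]
      ring
    have hmul2 : ∀ i, z i * (2 * (d i ⬝ᵥ (S *ᵥ r i))) = 2 * (z i * (d i ⬝ᵥ (S *ᵥ r i))) :=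
      fun i => by ring
    simp only [e2i, mul_add, Finset.sum_add_distrib, hmul2, Finset.mul_sum]
  rw [e1, e2]
  have hL' := hL
  linarith
end
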